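/- arXiv:1907.01868 — 6 statements merged into one kernel-verified Lean document; each statement's English description precedes it below -/
import Mathlib

section
/- For any β ≥ 0, ω > 0, α > 0, and a function g(n) satisfying ((β+α+1)·ln n/(α·ω·n))^(1/α) < g(n) < ω^(-1/α) for all sufficiently large n, the integral ∫₀^{g(n)} t^β (1 - ω t^α)^n dt is asymptotically equal to (1/α) · ω^{-(β+1)/α} · Γ((β+1)/α) · n^{-(β+1)/α} as n → ∞, i.e., the ratio of the two sides tends to 1. -/
open MeasureTheory Filter Real
open intervalIntegral Set

lemma aux_beta {s : ℝ} (hs : 0 < s) (n : ℕ) :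
    Real.GammaSeq s n = (n : ℝ) ^ s * ∫ u in (0:ℝ)..1, u ^ (s-1) * (1-u) ^ n := by
  have h2 : Complex.betaIntegral s (n+1)
      = ((∫ u in (0:ℝ)..1, u ^ (s-1) * (1-u) ^ n : ℝ) : ℂ) := by
    rw [Complex.betaIntegral, ← intervalIntegral.integral_ofReal]
    refine intervalIntegral.integral_congr fun x hx => ?_
    rw [Set.uIcc_of_le (by norm_num : (0:ℝ) ≤ 1)] at hx
    have e1 : ((s:ℂ) - 1) = ((s - 1 : ℝ) : ℂ) := by push_cast; ring
    have e2 : ((n:ℕ)+1 : ℂ) - 1 = ((n:ℕ) : ℂ) := by push_cast; ring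
    have e3 : (1 : ℂ) - (x:ℂ) = ((1 - x : ℝ) : ℂ) := by push_cast; ring
    rw [e1, e2, e3, ← Complex.ofReal_cpow hx.1, Complex.cpow_natCast]
    push_cast
    ring
  have h1 : Complex.GammaSeq s n = (n:ℂ) ^ (s:ℂ) * Complex.betaIntegral s (n+1) :=
    Complex.GammaSeq_eq_betaIntegral_of_re_pos (by simpa using hs) n
  have h3 : (Complex.GammaSeq s n) = ((Real.GammaSeq s n : ℝ) : ℂ) := by
    rw [Real.GammaSeq, Complex.GammaSeq]
    push_cast
    rw [Complex.ofReal_cpow n.cast_nonneg]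
    push_cast
    ring
  have e4 : ((n:ℕ) : ℂ) = (((n:ℝ)) : ℂ) := by push_cast; ring
  rw [h3, h2, e4, ← Complex.ofReal_cpow n.cast_nonneg, ← Complex.ofReal_mul] at h1
  exact_mod_cast h1

lemma aux_subst {α β ω : ℝ} (hβ : 0 ≤ β) (hω : 0 < ω) (hα : 0 < α)
    {c : ℝ} (hc : 0 ≤ c) (n : ℕ) :
    ∫ t in (0:ℝ)..c, t ^ β * (1 - ω * t ^ α) ^ n
      = (1/(α * ω ^ ((β+1)/α))) *
        ∫ u in (0:ℝ)..(ω * c ^ α), u ^ ((β+1)/α - 1) * (1-u) ^ n := by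
  set s := (β+1)/α with hsdef
  have hs : 0 < s := div_pos (by linarith) hα
  have hαs : α * s = β + 1 := by rw [hsdef]; field_simp
  have hω_split : ω ^ s = ω * ω ^ (s - 1) := by
    nth_rewrite 1 [show s = 1 + (s-1) by ring]
    rw [Real.rpow_add hω, Real.rpow_one]
  set f : ℝ → ℝ := fun t => ω * t ^ α with hf
  set f' : ℝ → ℝ := fun t => α * ω * t ^ (α - 1) with hf'
  set G : ℝ → ℝ := fun u => u ^ (s-1) * (1-u) ^ n with hG
  have hfc : ContinuousOn f (Set.uIcc (0:ℝ) c) := by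
    exact continuousOn_const.mul (fun x _ =>
      (Real.continuousAt_rpow_const x α (Or.inr hα.le)).continuousWithinAt)
  have hGint : IntervalIntegrable G volume 0 (ω * c ^ α) :=
    (intervalIntegral.intervalIntegrable_rpow' (by linarith)).mul_continuousOn
      (by fun_prop)
  have himg : f '' (Set.uIcc (0:ℝ) c) ⊆ (Set.uIcc (0:ℝ) (ω * c ^ α)) := by
    rw [uIcc_of_le hc, uIcc_of_le (mul_nonneg hω.le (Real.rpow_nonneg hc α))]
    rintro y ⟨x, hx, rfl⟩
    exact ⟨mul_nonneg hω.le (Real.rpow_nonneg hx.1 α), mul_le_mul_of_nonneg_left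
      (Real.rpow_le_rpow hx.1 hx.2 hα.le) hω.le⟩
  have key := intervalIntegral.integral_comp_smul_deriv''' (f := f) (f' := f') (g := G)
    (a := 0) (b := c) hfc ?_ ?_ ?_ ?_
  · have hf0 : f 0 = 0 := by simp [hf, Real.zero_rpow hα.ne']
    rw [hf0] at key
    rw [← key]
    have hcongr : ∫ x in (0:ℝ)..c, f' x • (G ∘ f) x
        = ∫ x in (0:ℝ)..c, (α * ω ^ s) * (x ^ β * (1 - ω * x ^ α) ^ n) := by
      refine intervalIntegral.integral_congr_ae (Filter.Eventually.of_forall fun x hx => ?_)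
      rw [Set.uIoc_of_le hc] at hx
      have hx0 : 0 < x := hx.1
      simp only [hf', hG, hf, Function.comp_apply, smul_eq_mul]
      rw [Real.mul_rpow hω.le (Real.rpow_nonneg hx0.le α), ← Real.rpow_mul hx0.le]
      rw [show α * (s-1) = β + 1 - α by linarith [hαs]]
      rw [show x ^ β = x ^ (α - 1) * x ^ (β + 1 - α) by
        rw [← Real.rpow_add hx0]; ring_nf]
      rw [hω_split]; ring
    rw [hcongr, intervalIntegral.integral_const_mul]
    have : α * ω ^ s ≠ 0 := by positivity
    field_simp
  · -- derivative
    intro x hx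
    rw [min_eq_left hc, max_eq_right hc] at hx
    have h1 : HasDerivAt (fun t : ℝ => t ^ α) (α * x ^ (α - 1)) x :=
      Real.hasDerivAt_rpow_const (Or.inl hx.1.ne')
    have h2 : HasDerivAt f (ω * (α * x ^ (α-1))) x := h1.const_mul ω
    have : HasDerivAt f (f' x) x := by
      convert h2 using 1; simp [hf']; ring
    exact this.hasDerivWithinAt
  · -- continuity of G on image of Ioo
    rw [min_eq_left hc, max_eq_right hc]
    refine ContinuousOn.mono ?_ (s := {u : ℝ | u ≠ 0}) ?_
    · exact ContinuousOn.mul (fun u hu =>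
        (Real.continuousAt_rpow_const u (s-1) (Or.inl hu)).continuousWithinAt)
        (by fun_prop)
    · rintro y ⟨x, hx, rfl⟩
      have : (0:ℝ) < ω * x ^ α := by
        have := Real.rpow_pos_of_pos hx.1 α; positivity
      exact this.ne'
  · -- integrability of G on image
    exact ((intervalIntegrable_iff' (f := G) (μ := volume) (a := 0) (b := ω * c ^ α)).mp hGint).mono_set himg
  · -- integrability of combined integrand
    have h0 : ∀ᵐ x : ℝ, x ≠ (0:ℝ) := by
      refine ae_iff.2 ?_
      simpa using measure_singleton (0:ℝ)
    have heq : (fun x => (α * ω ^ s) * (x ^ β * (1 - ω * x ^ α) ^ n))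
        =ᵐ[volume.restrict (Set.uIcc (0:ℝ) c)] (fun x => f' x • (G ∘ f) x) := by
      filter_upwards [ae_restrict_mem measurableSet_uIcc, ae_restrict_of_ae h0]
        with x hx hx0
      rw [uIcc_of_le hc] at hx
      have hx1 : 0 < x := lt_of_le_of_ne hx.1 (Ne.symm hx0)
      simp only [hf', hG, hf, Function.comp_apply, smul_eq_mul]
      rw [Real.mul_rpow hω.le (Real.rpow_nonneg hx1.le α), ← Real.rpow_mul hx1.le]
      rw [show α * (s-1) = β + 1 - α by linarith [hαs]]
      rw [show x ^ β = x ^ (α - 1) * x ^ (β + 1 - α) by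
        rw [← Real.rpow_add hx1]; ring_nf]
      rw [hω_split]; ring
    refine MeasureTheory.Integrable.congr ?_ heq
    refine (Continuous.integrableOn_uIcc ?_)
    have hc1 : Continuous fun x : ℝ => x ^ β := by
      exact continuous_iff_continuousAt.2 fun x =>
        Real.continuousAt_rpow_const x β (Or.inr hβ)
    have hc2 : Continuous fun x : ℝ => x ^ α := by
      exact continuous_iff_continuousAt.2 fun x =>
        Real.continuousAt_rpow_const x α (Or.inr hα.le)
    fun_prop

lemma aux_tendsto {s : ℝ} (hs : 0 < s) (x : ℕ → ℝ)
    (hx : ∀ᶠ n : ℕ in atTop, (s+1) * Real.log n / n ≤ x n ∧ x n ≤ 1) :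
    Tendsto (fun n : ℕ => (n:ℝ) ^ s * ∫ u in (0:ℝ)..(x n), u ^ (s-1) * (1-u) ^ n)
      atTop (nhds (Real.Gamma s)) := by
  have hint : ∀ (a b : ℝ) (n : ℕ),
      IntervalIntegrable (fun u : ℝ => u ^ (s-1) * (1-u) ^ n) volume a b :=
    fun a b n => (intervalIntegral.intervalIntegrable_rpow' (by linarith)).mul_continuousOn
      (by fun_prop)
  have hfull : Tendsto (fun n : ℕ => (n:ℝ) ^ s * ∫ u in (0:ℝ)..1, u ^ (s-1) * (1-u) ^ n)
      atTop (nhds (Real.Gamma s)) := by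
    have := Real.GammaSeq_tendsto_Gamma s
    refine this.congr fun n => ?_
    rw [aux_beta hs n]
  have htail : Tendsto
      (fun n : ℕ => (n:ℝ) ^ s * ∫ u in (x n)..1, u ^ (s-1) * (1-u) ^ n)
      atTop (nhds 0) := by
    have hb : Tendsto (fun n : ℕ => 1 / (s * (n:ℝ))) atTop (nhds 0) := by
      have h2 := tendsto_one_div_atTop_nhds_zero_nat (𝕜 := ℝ)
      have := h2.const_mul (1/s)
      simpa [one_div, mul_comm, mul_assoc, mul_inv] using this
    refine tendsto_of_tendsto_of_tendsto_of_le_of_le' tendsto_const_nhds hb ?_ ?_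
    · -- nonnegativity, eventually
      filter_upwards [hx, eventually_ge_atTop 1] with n hn hn1
      have hx0 : 0 ≤ x n := le_trans (by
        have : (0:ℝ) ≤ Real.log n := Real.log_nonneg (by exact_mod_cast hn1)
        positivity) hn.1
      refine mul_nonneg (Real.rpow_nonneg (Nat.cast_nonneg n) s) ?_
      refine intervalIntegral.integral_nonneg hn.2 fun u hu => ?_
      exact mul_nonneg (Real.rpow_nonneg (le_trans hx0 hu.1) _)
        (pow_nonneg (by linarith [hu.2]) n)
    · -- upper bound, eventually
      filter_upwards [hx, eventually_ge_atTop 1] with n hn hn1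
      have hn1' : (1:ℝ) ≤ (n:ℝ) := by exact_mod_cast hn1
      have hnpos : (0:ℝ) < n := by linarith
      have hlogn : (0:ℝ) ≤ Real.log n := Real.log_nonneg hn1'
      have hx0 : 0 ≤ x n := le_trans (by positivity) hn.1
      have hx1 : x n ≤ 1 := hn.2
      have step1 : ∫ u in (x n)..1, u ^ (s-1) * (1-u) ^ n
          ≤ ∫ u in (x n)..1, u ^ (s-1) * (1 - x n) ^ n := by
        refine intervalIntegral.integral_mono_on hx1 (hint _ _ n)
          ((intervalIntegral.intervalIntegrable_rpow' (by linarith)).mul_const _)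
          fun u hu => ?_
        refine mul_le_mul_of_nonneg_left ?_ (Real.rpow_nonneg (le_trans hx0 hu.1) _)
        exact pow_le_pow_left₀ (by linarith [hu.2]) (by linarith [hu.1]) n
      have step2 : ∫ u in (x n)..1, u ^ (s-1) * (1 - x n) ^ n
          ≤ (1 - x n) ^ n / s := by
        rw [intervalIntegral.integral_mul_const, integral_rpow (Or.inl (by linarith))]
        rw [show s - 1 + 1 = s by ring, Real.one_rpow]
        have h1 : (0:ℝ) ≤ (x n) ^ s := Real.rpow_nonneg hx0 s
        have h2 : (0:ℝ) ≤ (1 - x n) ^ n := pow_nonneg (by linarith) n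
        have key2 : (1 - x n ^ s) * (1 - x n)^n ≤ (1 - x n)^n := by
          nlinarith [mul_nonneg h1 h2]
        rw [div_mul_eq_mul_div]
        exact div_le_div_of_nonneg_right key2 hs.le
      have step3 : (1 - x n) ^ n ≤ (n:ℝ) ^ (-(s+1)) := by
        have e1 : (1 - x n) ^ n ≤ Real.exp (-(x n)) ^ n :=
          pow_le_pow_left₀ (by linarith) (by linarith [Real.add_one_le_exp (-(x n))]) n
        have e2 : Real.exp (-(x n)) ^ n = Real.exp (-((n:ℝ) * x n)) := by
          rw [← Real.exp_nat_mul]; ring_nf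
        have e3 : Real.exp (-((n:ℝ) * x n)) ≤ Real.exp (-((s+1) * Real.log n)) := by
          apply Real.exp_le_exp.2
          have := (div_le_iff₀ hnpos).1 hn.1
          linarith
        have e4 : Real.exp (-((s+1) * Real.log n)) = (n:ℝ) ^ (-(s+1)) := by
          rw [Real.rpow_def_of_pos hnpos]; ring_nf
        calc (1 - x n) ^ n ≤ Real.exp (-(x n)) ^ n := e1
          _ = Real.exp (-((n:ℝ) * x n)) := e2
          _ ≤ Real.exp (-((s+1) * Real.log n)) := e3
          _ = (n:ℝ) ^ (-(s+1)) := e4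
      calc (n:ℝ) ^ s * ∫ u in (x n)..1, u ^ (s-1) * (1-u) ^ n
          ≤ (n:ℝ) ^ s * ((1 - x n) ^ n / s) :=
            mul_le_mul_of_nonneg_left (step1.trans step2) (Real.rpow_nonneg hnpos.le s)
        _ ≤ (n:ℝ) ^ s * ((n:ℝ) ^ (-(s+1)) / s) := by
            refine mul_le_mul_of_nonneg_left ?_ (Real.rpow_nonneg hnpos.le s)
            exact div_le_div_of_nonneg_right step3 hs.le
        _ = 1 / (s * n) := by
            rw [div_eq_mul_inv, ← mul_assoc, ← Real.rpow_add hnpos]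
            rw [show s + -(s+1) = -1 by ring, Real.rpow_neg_one]
            field_simp
  have := hfull.sub htail
  rw [sub_zero] at this
  refine this.congr' ?_
  filter_upwards [hx, eventually_ge_atTop 1] with n hn hn1
  have hlogn : (0:ℝ) ≤ Real.log n := Real.log_nonneg (by exact_mod_cast hn1)
  have hnn : (0:ℝ) < (n:ℝ) := by positivity
  have hx0 : 0 ≤ x n := le_trans (by positivity) hn.1
  rw [← intervalIntegral.integral_interval_sub_left (hint 0 1 n) (hint 0 (x n) n)]
  ring

theorem stmt0 (α β ω : ℝ) (hβ : 0 ≤ β) (hω : 0 < ω) (hα : 0 < α)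
    (g : ℕ → ℝ)
    (hg : ∀ᶠ n : ℕ in atTop,
      ((β + α + 1) * Real.log n / (α * ω * n)) ^ (1/α) < g n ∧ g n < ω ^ (-(1/α))) :
    Tendsto (fun n : ℕ =>
      (∫ t in (0:ℝ)..(g n), t ^ β * (1 - ω * t ^ α) ^ n) /
      ((1/α) * ω ^ (-((β+1)/α)) * Real.Gamma ((β+1)/α) * (n:ℝ) ^ (-((β+1)/α))))
      atTop (nhds 1) := by
  set s : ℝ := (β+1)/α with hsdef
  have hs : 0 < s := div_pos (by linarith) hα
  have hΓ : 0 < Real.Gamma s := Real.Gamma_pos_of_pos hs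
  set x : ℕ → ℝ := fun n => ω * (g n) ^ α with hxdef
  -- basic facts about g and x on the eventual set
  have hfacts : ∀ᶠ n : ℕ in atTop,
      0 < g n ∧ (s+1) * Real.log n / n ≤ x n ∧ x n ≤ 1 := by
    filter_upwards [hg, eventually_ge_atTop 1] with n hn hn1
    have hn1' : (1:ℝ) ≤ (n:ℝ) := by exact_mod_cast hn1
    have hnpos : (0:ℝ) < (n:ℝ) := by linarith
    have hlog : (0:ℝ) ≤ Real.log n := Real.log_nonneg hn1'
    set A : ℝ := (β + α + 1) * Real.log n / (α * ω * n) with hA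
    have hA0 : 0 ≤ A := by positivity
    have hg0 : 0 < g n := lt_of_le_of_lt (Real.rpow_nonneg hA0 _) hn.1
    refine ⟨hg0, ?_, ?_⟩
    · -- lower bound
      have h1 : A < (g n) ^ α := by
        have h1' := Real.rpow_lt_rpow (Real.rpow_nonneg hA0 (1/α)) hn.1 hα
        rwa [← Real.rpow_mul hA0, one_div_mul_cancel hα.ne', Real.rpow_one] at h1'
      have h2 : ω * A ≤ x n := by
        exact mul_le_mul_of_nonneg_left h1.le hω.le
      refine le_trans (le_of_eq ?_) h2
      rw [hA, hsdef]
      field_simp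
      ring_nf
    · -- upper bound
      have h1 : (g n) ^ α < (ω ^ (-(1/α))) ^ α :=
        Real.rpow_lt_rpow hg0.le hn.2 hα
      rw [← Real.rpow_mul hω.le, show (-(1/α)) * α = -1 by field_simp, Real.rpow_neg_one] at h1
      have : x n < ω * ω⁻¹ := mul_lt_mul_of_pos_left h1 hω
      rw [mul_inv_cancel₀ hω.ne'] at this
      exact this.le
  have key := aux_tendsto hs x (hfacts.mono fun n hn => hn.2)
  have hmain := key.div_const (Real.Gamma s)
  rw [div_self hΓ.ne'] at hmain
  refine hmain.congr' ?_
  filter_upwards [hfacts, eventually_ge_atTop 1] with n hn hn1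
  have hn1' : (1:ℝ) ≤ (n:ℝ) := by exact_mod_cast hn1
  have hnpos : (0:ℝ) < (n:ℝ) := by linarith
  have hg0 : 0 < g n := hn.1
  rw [aux_subst hβ hω hα hg0.le n]
  have hns : (0:ℝ) < (n:ℝ) ^ s := Real.rpow_pos_of_pos hnpos s
  have hωs : (0:ℝ) < ω ^ s := Real.rpow_pos_of_pos hω s
  rw [Real.rpow_neg hω.le, Real.rpow_neg hnpos.le]
  show (n:ℝ) ^ s * (∫ u in (0:ℝ)..(x n), u ^ (s-1) * (1-u) ^ n) / Real.Gamma s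
    = (1/(α * ω ^ s)) * (∫ u in (0:ℝ)..(x n), u ^ (s-1) * (1-u) ^ n)
      / ((1/α) * (ω ^ s)⁻¹ * Real.Gamma s * ((n:ℝ) ^ s)⁻¹)
  field_simp
end

section
/- Let f : ℝ → ℝ be C² with f(0) = 0, f'(0) = 0, and f''(0) = κ > 0, and let g : ℝ → ℝ be C² with g(0) = 0, g'(0) = 0, and g''(0) = λ where 0 ≤ λ < κ. For small t > 0 let x₋(t) < 0 < x₊(t) be the solutions near 0 of f(x) = g(x) + t (i.e., the intersection points of the graph of f with the vertically translated graph of g). Then the area A(t) = ∫_{x₋(t)}^{x₊(t)} (g(x) + t − f(x)) dx satisfies lim_{t→0⁺} A(t) · t^{−3/2} = (4/3)·√(2/(κ − λ)). -/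
open MeasureTheory Filter Real Set

theorem quad_hasDerivAt (c x : ℝ) : HasDerivAt (fun x : ℝ => c * x ^ 2 / 2) (c * x) x := by
  have := ((hasDerivAt_pow 2 x).const_mul c).div_const 2
  refine this.congr_deriv ?_; push_cast; ring

theorem taylor_lower (h : ℝ → ℝ) (c r : ℝ) (hh : ContDiff ℝ 2 h)
    (h0 : h 0 = 0) (h1 : deriv h 0 = 0)
    (hbd : ∀ x, |x| ≤ r → c ≤ deriv (deriv h) x) :
    ∀ x, |x| ≤ r → c * x ^ 2 / 2 ≤ h x := by
  intro x hx
  have hr : 0 ≤ r := le_trans (abs_nonneg x) hx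
  have hd : Differentiable ℝ h := hh.differentiable two_ne_zero
  have h2 : ContDiff ℝ (1+1) h := by norm_num; exact hh
  have hd' : Differentiable ℝ (deriv h) :=
    ((contDiff_succ_iff_deriv.mp h2).2.2).differentiable one_ne_zero
  set p : ℝ → ℝ := fun y => h y - c * y ^ 2 / 2 with hp_def
  have hp : ∀ y, HasDerivAt p (deriv h y - c * y) y :=
    fun y => ((hd y).hasDerivAt).sub (quad_hasDerivAt c y)
  have hp' : deriv p = fun y => deriv h y - c * y := funext fun y => (hp y).deriv
  have hq : ∀ y, HasDerivAt (deriv p) (deriv (deriv h) y - c) y := by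
    intro y
    rw [hp']
    exact ((hd' y).hasDerivAt).sub (by simpa using (hasDerivAt_id y).const_mul c)
  have hpdiff : Differentiable ℝ p := fun y => (hp y).differentiableAt
  have hqdiff : Differentiable ℝ (deriv p) := fun y => (hq y).differentiableAt
  -- deriv p is monotone on [-r, r]
  have hmono : MonotoneOn (deriv p) (Icc (-r) r) := by
    apply monotoneOn_of_deriv_nonneg (convex_Icc _ _) hqdiff.continuous.continuousOn
      hqdiff.differentiableOn
    intro y hy
    rw [interior_Icc] at hy
    rw [(hq y).deriv]
    have : |y| ≤ r := abs_le.mpr ⟨hy.1.le, hy.2.le⟩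
    linarith [hbd y this]
  have hp0 : deriv p 0 = 0 := by rw [hp']; simp [h1]
  have hP0 : p 0 = 0 := by simp [hp_def, h0]
  rcases le_or_gt 0 x with hx0 | hx0
  · -- p monotone on [0, r]
    have hm2 : MonotoneOn p (Icc 0 r) := by
      apply monotoneOn_of_deriv_nonneg (convex_Icc _ _) hpdiff.continuous.continuousOn
        hpdiff.differentiableOn
      intro y hy
      rw [interior_Icc] at hy
      rw [← hp0]
      exact hmono ⟨neg_nonpos_of_nonneg hr, hr⟩ ⟨by linarith [hy.1], hy.2.le⟩ hy.1.le
    have hxr : x ≤ r := le_trans (le_abs_self x) hx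
    have := hm2 ⟨le_refl 0, hr⟩ ⟨hx0, hxr⟩ hx0
    rw [hP0] at this
    simp only [hp_def] at this
    linarith [this]
  · have hm2 : AntitoneOn p (Icc (-r) 0) := by
      apply antitoneOn_of_deriv_nonpos (convex_Icc _ _) hpdiff.continuous.continuousOn
        hpdiff.differentiableOn
      intro y hy
      rw [interior_Icc] at hy
      rw [← hp0]
      exact hmono ⟨hy.1.le, by linarith [hy.2]⟩ ⟨neg_nonpos_of_nonneg hr, hr⟩ hy.2.le
    have hxr : -r ≤ x := neg_le_of_abs_le hx
    have := hm2 ⟨hxr, hx0.le⟩ ⟨neg_nonpos_of_nonneg hr, le_refl 0⟩ hx0.le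
    rw [hP0] at this
    simp only [hp_def] at this
    linarith [this]

theorem taylor_upper (h : ℝ → ℝ) (c r : ℝ) (hh : ContDiff ℝ 2 h)
    (h0 : h 0 = 0) (h1 : deriv h 0 = 0)
    (hbd : ∀ x, |x| ≤ r → deriv (deriv h) x ≤ c) :
    ∀ x, |x| ≤ r → h x ≤ c * x ^ 2 / 2 := by
  have e1 : deriv (fun y => -h y) = fun y => -(deriv h y) := funext fun y => deriv.fun_neg
  have e2 : deriv (deriv (fun y => -h y)) = fun y => -(deriv (deriv h) y) := by
    rw [e1]; exact funext fun y => deriv.fun_neg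
  intro x hx
  have := taylor_lower (fun y => -h y) (-c) r hh.neg (by simp [h0])
    (by rw [e1]; simp [h1])
    (by intro y hy; rw [e2]; simpa using hbd y hy) x hx
  linarith [this]

theorem quad_integral (t K c : ℝ) :
    ∫ x in (-c)..c, (t - K * x ^ 2 / 2) = 2*t*c - K*c^3/3 := by
  have e : (fun x : ℝ => t - K * x ^ 2 / 2) = fun x => t - (K/2) * x ^ 2 := by funext x; ring
  rw [e, intervalIntegral.integral_sub (g := fun x : ℝ => K/2 * x^2) intervalIntegrable_const
    ((continuous_const.mul (continuous_pow 2)).intervalIntegrable _ _),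
    intervalIntegral.integral_const, intervalIntegral.integral_const_mul, integral_pow]
  simp [smul_eq_mul]; ring

set_option maxHeartbeats 1000000 in
theorem stmt5 (f g : ℝ → ℝ) (κ lam : ℝ)
    (hf : ContDiff ℝ 2 f) (hf0 : f 0 = 0) (hf1 : deriv f 0 = 0) (hf2 : deriv (deriv f) 0 = κ)
    (hκ : 0 < κ)
    (hg : ContDiff ℝ 2 g) (hg0 : g 0 = 0) (hg1 : deriv g 0 = 0) (hg2 : deriv (deriv g) 0 = lam)
    (hlam : 0 ≤ lam) (hlamκ : lam < κ)
    (xm xp : ℝ → ℝ)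
    (hx : ∀ᶠ t in nhdsWithin 0 (Set.Ioi 0), xm t < 0 ∧ 0 < xp t ∧
      f (xm t) = g (xm t) + t ∧ f (xp t) = g (xp t) + t)
    (hxm : Tendsto xm (nhdsWithin 0 (Set.Ioi 0)) (nhds 0))
    (hxp : Tendsto xp (nhdsWithin 0 (Set.Ioi 0)) (nhds 0)) :
    Tendsto (fun t => (∫ x in (xm t)..(xp t), (g x + t - f x)) * t ^ (-(3/2) : ℝ))
      (nhdsWithin 0 (Set.Ioi 0)) (nhds ((4/3) * Real.sqrt (2/(κ - lam)))) := by
  set μ := κ - lam with hμdef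
  clear_value μ
  have hμ : 0 < μ := by rw [hμdef]; exact sub_pos.2 hlamκ
  set h : ℝ → ℝ := fun x => f x - g x with hhdef
  clear_value h
  have hhC : ContDiff ℝ 2 h := by rw [hhdef]; exact hf.sub hg
  have hfd : Differentiable ℝ f := hf.differentiable two_ne_zero
  have hgd : Differentiable ℝ g := hg.differentiable two_ne_zero
  have hhd : Differentiable ℝ h := hhC.differentiable two_ne_zero
  have dh : deriv h = fun x => deriv f x - deriv g x := by
    rw [hhdef]; exact funext fun x => deriv_sub (hfd x) (hgd x)
  have h0 : h 0 = 0 := by rw [hhdef]; simp [hf0, hg0]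
  have h1 : deriv h 0 = 0 := by rw [dh]; simp [hf1, hg1]
  have hf11 : ContDiff ℝ (1+1) f := by norm_num; exact hf
  have hg11 : ContDiff ℝ (1+1) g := by norm_num; exact hg
  have hh11 : ContDiff ℝ (1+1) h := by norm_num; exact hhC
  have hfd' : Differentiable ℝ (deriv f) :=
    ((contDiff_succ_iff_deriv.mp hf11).2.2).differentiable one_ne_zero
  have hgd' : Differentiable ℝ (deriv g) :=
    ((contDiff_succ_iff_deriv.mp hg11).2.2).differentiable one_ne_zero
  have hhd' : Differentiable ℝ (deriv h) :=
    ((contDiff_succ_iff_deriv.mp hh11).2.2).differentiable one_ne_zero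
  have ddh : deriv (deriv h) = fun x => deriv (deriv f) x - deriv (deriv g) x := by
    rw [dh]; exact funext fun x => deriv_sub (hfd' x) (hgd' x)
  have h2 : deriv (deriv h) 0 = μ := by rw [ddh]; simp [hf2, hg2, hμdef]
  have hcont2 : Continuous (deriv (deriv h)) :=
    (contDiff_one_iff_deriv.mp (contDiff_succ_iff_deriv.mp hh11).2.2).2
  set L := (4/3) * Real.sqrt (2/μ) with hLdef
  clear_value L
  rw [Metric.tendsto_nhds]
  intro δ hδ
  -- choose ε
  have hconthi : ContinuousAt (fun ε : ℝ => (4/3) * Real.sqrt (2/(μ-ε))) 0 := by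
    apply ContinuousAt.mul continuousAt_const
    apply Real.continuous_sqrt.continuousAt.comp
    exact ContinuousAt.div continuousAt_const (continuousAt_const.sub continuousAt_id)
      (by simpa using hμ.ne')
  have hcontlo : ContinuousAt (fun ε : ℝ => (4/3) * Real.sqrt (2/(μ+ε))) 0 := by
    apply ContinuousAt.mul continuousAt_const
    apply Real.continuous_sqrt.continuousAt.comp
    exact ContinuousAt.div continuousAt_const (continuousAt_const.add continuousAt_id)
      (by simpa using hμ.ne')
  have hhi_t : Tendsto (fun ε : ℝ => (4/3) * Real.sqrt (2/(μ-ε))) (nhdsWithin 0 (Set.Ioi 0)) (nhds L) := by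
    have := hconthi.tendsto
    simp only [sub_zero] at this
    rw [hLdef]
    exact this.mono_left nhdsWithin_le_nhds
  have hlo_t : Tendsto (fun ε : ℝ => (4/3) * Real.sqrt (2/(μ+ε))) (nhdsWithin 0 (Set.Ioi 0)) (nhds L) := by
    have := hcontlo.tendsto
    simp only [add_zero] at this
    rw [hLdef]
    exact this.mono_left nhdsWithin_le_nhds
  have hev : ∀ᶠ ε in nhdsWithin (0:ℝ) (Set.Ioi 0),
      ((4/3) * Real.sqrt (2/(μ-ε)) < L + δ ∧ L - δ < (4/3) * Real.sqrt (2/(μ+ε))) ∧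
      (0 < ε ∧ ε < μ) := by
    filter_upwards [hhi_t.eventually_lt_const (by linarith : L < L + δ),
      hlo_t.eventually_const_lt (by linarith : L - δ < L),
      Ioo_mem_nhdsGT_of_mem (by constructor <;> simp [hμ] : (0:ℝ) ∈ Set.Ico 0 μ)] with ε e1 e2 e3
    exact ⟨⟨e1, e2⟩, e3.1, e3.2⟩
  obtain ⟨ε, ⟨⟨hhiδ, hloδ⟩, hε, hεμ⟩⟩ := hev.exists
  have hc1 : 0 < μ - ε := by linarith
  have hc2 : 0 < μ + ε := by linarith
  -- choose r
  obtain ⟨r0, hr0, hball⟩ := Metric.continuousAt_iff.mp hcont2.continuousAt ε hε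
  set r := r0/2 with hrdef
  have hr : 0 < r := by rw [hrdef]; positivity
  clear_value r
  have Hbd : ∀ x, |x| ≤ r → μ - ε ≤ deriv (deriv h) x ∧ deriv (deriv h) x ≤ μ + ε := by
    intro x hxr
    have : dist x 0 < r0 := by rw [Real.dist_eq, sub_zero]; rw [hrdef] at hxr; linarith
    have := hball this
    rw [Real.dist_eq, h2] at this
    have := abs_lt.mp this
    constructor <;> linarith [this.1, this.2]
  have Htl : ∀ x, |x| ≤ r → (μ-ε) * x ^ 2 / 2 ≤ h x :=
    taylor_lower h (μ-ε) r hhC h0 h1 fun x hx => (Hbd x hx).1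
  have Htu : ∀ x, |x| ≤ r → h x ≤ (μ+ε) * x ^ 2 / 2 :=
    taylor_upper h (μ+ε) r hhC h0 h1 fun x hx => (Hbd x hx).2
  have hconv : ConvexOn ℝ (Set.Icc (-r) r) h := by
    apply convexOn_of_deriv2_nonneg' (convex_Icc _ _) hhd.differentiableOn hhd'.differentiableOn
    intro x hxI
    have hxr : |x| ≤ r := abs_le.mpr ⟨hxI.1, hxI.2⟩
    have : deriv^[2] h x = deriv (deriv h) x := by
      rw [Function.iterate_succ_apply', Function.iterate_one]
    rw [this]
    linarith [(Hbd x hxr).1]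
  -- the eventual estimate in t
  have hev1 : ∀ᶠ t in nhdsWithin (0:ℝ) (Set.Ioi 0), |xm t| < r := by
    have := Metric.tendsto_nhds.mp hxm r hr
    simpa [Real.dist_eq] using this
  have hev2 : ∀ᶠ t in nhdsWithin (0:ℝ) (Set.Ioi 0), |xp t| < r := by
    have := Metric.tendsto_nhds.mp hxp r hr
    simpa [Real.dist_eq] using this
  filter_upwards [hx, hev1, hev2, self_mem_nhdsWithin] with t hxt h1t h2t htmem
  obtain ⟨hm_neg, hp_pos, hfm, hfp⟩ := hxt
  have ht : 0 < t := htmem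
  have hum : |xm t| ≤ r := h1t.le
  have hvm : |xp t| ≤ r := h2t.le
  have hhu : h (xm t) = t := by simp only [hhdef]; linarith
  have hhv : h (xp t) = t := by simp only [hhdef]; linarith

  have huv : xm t ≤ xp t := by linarith
  -- endpoint bounds
  set a := Real.sqrt (2*t/(μ+ε)) with hadef
  set b := Real.sqrt (2*t/(μ-ε)) with hbdef
  have ha_pos : 0 < a := by rw [hadef]; exact Real.sqrt_pos.mpr (by positivity)
  have hb_pos : 0 < b := by rw [hbdef]; exact Real.sqrt_pos.mpr (by positivity)
  have ha2 : a ^ 2 = 2*t/(μ+ε) := by rw [hadef]; exact Real.sq_sqrt (by positivity)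
  have hb2 : b ^ 2 = 2*t/(μ-ε) := by rw [hbdef]; exact Real.sq_sqrt (by positivity)
  clear_value a b
  have ha2' : (μ+ε) * a ^ 2 = 2*t := by rw [ha2]; field_simp
  have hb2' : (μ-ε) * b ^ 2 = 2*t := by rw [hb2]; field_simp
  have hv2l : 2*t/(μ+ε) ≤ (xp t)^2 := by
    have := Htu _ hvm; rw [hhv] at this
    rw [div_le_iff₀ hc2, mul_comm]; linarith
  have hv2u : (xp t)^2 ≤ 2*t/(μ-ε) := by
    have := Htl _ hvm; rw [hhv] at this
    rw [le_div_iff₀ hc1, mul_comm]; linarith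
  have hu2l : 2*t/(μ+ε) ≤ (xm t)^2 := by
    have := Htu _ hum; rw [hhu] at this
    rw [div_le_iff₀ hc2, mul_comm]; linarith
  have hu2u : (xm t)^2 ≤ 2*t/(μ-ε) := by
    have := Htl _ hum; rw [hhu] at this
    rw [le_div_iff₀ hc1, mul_comm]; linarith
  have hav : a ≤ xp t := by
    calc a = Real.sqrt (2*t/(μ+ε)) := hadef
    _ ≤ Real.sqrt ((xp t)^2) := Real.sqrt_le_sqrt hv2l
    _ = |xp t| := Real.sqrt_sq_eq_abs _
    _ = xp t := abs_of_pos hp_pos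
  have hvb : xp t ≤ b := by
    calc xp t ≤ |xp t| := le_abs_self _
    _ = Real.sqrt ((xp t)^2) := (Real.sqrt_sq_eq_abs _).symm
    _ ≤ Real.sqrt (2*t/(μ-ε)) := Real.sqrt_le_sqrt hv2u
    _ = b := hbdef.symm
  have hua : xm t ≤ -a := by
    have : a ≤ -(xm t) := by
      calc a = Real.sqrt (2*t/(μ+ε)) := hadef
      _ ≤ Real.sqrt ((xm t)^2) := Real.sqrt_le_sqrt hu2l
      _ = |xm t| := Real.sqrt_sq_eq_abs _
      _ = -(xm t) := abs_of_neg hm_neg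
    linarith
  have hbu : -b ≤ xm t := by
    have : -(xm t) ≤ b := by
      calc -(xm t) = |xm t| := (abs_of_neg hm_neg).symm
      _ = Real.sqrt ((xm t)^2) := (Real.sqrt_sq_eq_abs _).symm
      _ ≤ Real.sqrt (2*t/(μ-ε)) := Real.sqrt_le_sqrt hu2u
      _ = b := hbdef.symm
    linarith
  have ha_r : a ≤ r := le_trans hav (le_trans (le_abs_self _) hvm)
  -- integrand rewrite
  have hint : (fun x => g x + t - f x) = fun x => t - h x := by
    funext x; simp only [hhdef]; ring
  have hcth : Continuous fun x => t - h x := continuous_const.sub hhC.continuous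
  have int1 : ∀ p q : ℝ, IntervalIntegrable (fun x => t - h x) volume p q :=
    fun p q => hcth.intervalIntegrable _ _
  have intq : ∀ (K : ℝ) (p q : ℝ), IntervalIntegrable (fun x => t - K*x^2/2) volume p q :=
    fun K p q => (continuous_const.sub
      ((continuous_const.mul (continuous_pow 2)).div_const 2)).intervalIntegrable _ _
  -- upper bound
  have hUB : ∫ x in (xm t)..(xp t), (t - h x) ≤ (4/3) * Real.sqrt (2/(μ-ε)) * (t * Real.sqrt t) := by
    have s1 : ∫ x in (xm t)..(xp t), (t - h x) ≤ ∫ x in (xm t)..(xp t), (t - (μ-ε)*x^2/2) := by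
      apply intervalIntegral.integral_mono_on huv (int1 _ _) (intq _ _ _)
      intro x hxI
      have hxr : |x| ≤ r := abs_le.mpr
        ⟨by linarith [hxI.1, neg_le_of_abs_le hum], by linarith [hxI.2, le_trans (le_abs_self _) hvm]⟩
      linarith [Htl x hxr]
    have d1 : (∫ x in (-b)..(xm t), (t - (μ-ε)*x^2/2)) + ∫ x in (xm t)..b, (t - (μ-ε)*x^2/2)
        = ∫ x in (-b)..b, (t - (μ-ε)*x^2/2) :=
      intervalIntegral.integral_add_adjacent_intervals (intq _ _ _) (intq _ _ _)
    have d2 : (∫ x in (xm t)..(xp t), (t - (μ-ε)*x^2/2)) + ∫ x in (xp t)..b, (t - (μ-ε)*x^2/2)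
        = ∫ x in (xm t)..b, (t - (μ-ε)*x^2/2) :=
      intervalIntegral.integral_add_adjacent_intervals (intq _ _ _) (intq _ _ _)
    have sidebound : ∀ x, -b ≤ x → x ≤ b → 0 ≤ t - (μ-ε)*x^2/2 := by
      intro x hx1 hx2
      have hx2b : x^2 ≤ b^2 := sq_le_sq' hx1 hx2
      have h5 : (μ-ε) * x^2 ≤ (μ-ε) * b^2 := mul_le_mul_of_nonneg_left hx2b hc1.le
      linarith [h5, hb2']
    have n1 : 0 ≤ ∫ x in (-b)..(xm t), (t - (μ-ε)*x^2/2) := by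
      apply intervalIntegral.integral_nonneg hbu
      intro x hxI
      exact sidebound x hxI.1 (by linarith [hxI.2, hvb, hav, ha_pos])
    have n2 : 0 ≤ ∫ x in (xp t)..b, (t - (μ-ε)*x^2/2) := by
      apply intervalIntegral.integral_nonneg hvb
      intro x hxI
      exact sidebound x (by linarith [hxI.1, hbu, hua, ha_pos]) hxI.2
    have s3 : ∫ x in (-b)..b, (t - (μ-ε)*x^2/2) = 2*t*b - (μ-ε)*b^3/3 := quad_integral _ _ _
    have key : (μ-ε)*b^3 = 2*t*b := by
      calc (μ-ε)*b^3 = ((μ-ε)*b^2)*b := by ring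
      _ = 2*t*b := by rw [hb2']
    have hbsplit : b = Real.sqrt t * Real.sqrt (2/(μ-ε)) := by
      rw [hbdef, show 2*t/(μ-ε) = t * (2/(μ-ε)) by ring, Real.sqrt_mul ht.le]
    calc ∫ x in (xm t)..(xp t), (t - h x) ≤ ∫ x in (xm t)..(xp t), (t - (μ-ε)*x^2/2) := s1
    _ ≤ ∫ x in (-b)..b, (t - (μ-ε)*x^2/2) := by linarith [d1, d2, n1, n2]
    _ = 2*t*b - (μ-ε)*b^3/3 := s3
    _ = (4/3)*t*b := by linear_combination (-1/3 : ℝ) * key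
    _ = (4/3) * Real.sqrt (2/(μ-ε)) * (t * Real.sqrt t) := by rw [hbsplit]; ring
  -- h ≤ t on [xm t, xp t]
  have hle : ∀ x ∈ Set.Icc (xm t) (xp t), h x ≤ t := by
    intro x hxI
    have hseg : x ∈ segment ℝ (xm t) (xp t) := by
      rw [segment_eq_Icc huv]; exact hxI
    have := hconv.le_on_segment (abs_le.mp hum) (abs_le.mp hvm) hseg
    rwa [hhu, hhv, max_self] at this
  -- lower bound
  have hLB : (4/3) * Real.sqrt (2/(μ+ε)) * (t * Real.sqrt t) ≤ ∫ x in (xm t)..(xp t), (t - h x) := by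
    have s1 : ∫ x in (-a)..a, (t - (μ+ε)*x^2/2) ≤ ∫ x in (-a)..a, (t - h x) := by
      apply intervalIntegral.integral_mono_on (by linarith) (intq _ _ _) (int1 _ _)
      intro x hxI
      have hxr : |x| ≤ r := abs_le.mpr ⟨by linarith [hxI.1], by linarith [hxI.2]⟩
      linarith [Htu x hxr]
    have d1 : (∫ x in (xm t)..(-a), (t - h x)) + ∫ x in (-a)..(xp t), (t - h x)
        = ∫ x in (xm t)..(xp t), (t - h x) :=
      intervalIntegral.integral_add_adjacent_intervals (int1 _ _) (int1 _ _)
    have d2 : (∫ x in (-a)..a, (t - h x)) + ∫ x in a..(xp t), (t - h x)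
        = ∫ x in (-a)..(xp t), (t - h x) :=
      intervalIntegral.integral_add_adjacent_intervals (int1 _ _) (int1 _ _)
    have n1 : 0 ≤ ∫ x in (xm t)..(-a), (t - h x) := by
      apply intervalIntegral.integral_nonneg hua
      intro x hxI
      have := hle x ⟨hxI.1, by linarith [hxI.2]⟩
      linarith
    have n2 : 0 ≤ ∫ x in a..(xp t), (t - h x) := by
      apply intervalIntegral.integral_nonneg hav
      intro x hxI
      have := hle x ⟨by linarith [hxI.1], hxI.2⟩
      linarith
    have s3 : ∫ x in (-a)..a, (t - (μ+ε)*x^2/2) = 2*t*a - (μ+ε)*a^3/3 := quad_integral _ _ _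
    have key : (μ+ε)*a^3 = 2*t*a := by
      calc (μ+ε)*a^3 = ((μ+ε)*a^2)*a := by ring
      _ = 2*t*a := by rw [ha2']
    have hasplit : a = Real.sqrt t * Real.sqrt (2/(μ+ε)) := by
      rw [hadef, show 2*t/(μ+ε) = t * (2/(μ+ε)) by ring, Real.sqrt_mul ht.le]
    calc (4/3) * Real.sqrt (2/(μ+ε)) * (t * Real.sqrt t) = (4/3)*t*a := by rw [hasplit]; ring
    _ = 2*t*a - (μ+ε)*a^3/3 := by linear_combination (1/3 : ℝ) * key
    _ = ∫ x in (-a)..a, (t - (μ+ε)*x^2/2) := s3.symm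
    _ ≤ ∫ x in (-a)..a, (t - h x) := s1
    _ ≤ ∫ x in (xm t)..(xp t), (t - h x) := by linarith [d1, d2, n1, n2]
  -- conclude
  have htt : t ^ (-(3/2) : ℝ) = (t * Real.sqrt t)⁻¹ := by
    rw [Real.rpow_neg ht.le]
    congr 1
    rw [show (3/2 : ℝ) = 1 + 1/2 by norm_num, Real.rpow_add ht, Real.rpow_one,
      Real.sqrt_eq_rpow]
  have hts : 0 < t * Real.sqrt t := by positivity
  rw [hint, htt, Real.dist_eq, abs_lt]
  have hub2 : (∫ x in (xm t)..(xp t), (t - h x)) * (t * Real.sqrt t)⁻¹ ≤ (4/3) * Real.sqrt (2/(μ-ε)) := by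
    rw [← div_eq_mul_inv]
    exact (div_le_iff₀ hts).mpr hUB
  have hlb2 : (4/3) * Real.sqrt (2/(μ+ε)) ≤ (∫ x in (xm t)..(xp t), (t - h x)) * (t * Real.sqrt t)⁻¹ := by
    rw [← div_eq_mul_inv]
    exact (le_div_iff₀ hts).mpr hLB
  constructor <;> [linarith [hlb2]; linarith [hub2]]
end

section
/- Let f : ℝ → ℝ be C² with f(0) = 0, f'(0) = 0, f''(0) = κ > 0, and g : ℝ → ℝ be C² with g(0) = 0, g'(0) = 0, g''(0) = λ, where 0 ≤ λ < κ. For small t > 0 let x₋(t) < 0 < x₊(t) be the solutions near 0 of f(x) = g(x) + t. Then lim_{t→0⁺} (x₊(t) − x₋(t)) · t^{−1/2} = 2√(2/(κ − λ)). -/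
open Filter Real

theorem stmt6 (f g : ℝ → ℝ) (κ lam : ℝ)
    (hf : ContDiff ℝ 2 f) (hf0 : f 0 = 0) (hf1 : deriv f 0 = 0) (hf2 : deriv (deriv f) 0 = κ)
    (hκ : 0 < κ)
    (hg : ContDiff ℝ 2 g) (hg0 : g 0 = 0) (hg1 : deriv g 0 = 0) (hg2 : deriv (deriv g) 0 = lam)
    (hlam : 0 ≤ lam) (hlamκ : lam < κ)
    (xm xp : ℝ → ℝ)
    (hx : ∀ᶠ t in nhdsWithin 0 (Set.Ioi 0), xm t < 0 ∧ 0 < xp t ∧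
      f (xm t) = g (xm t) + t ∧ f (xp t) = g (xp t) + t)
    (hxm : Tendsto xm (nhdsWithin 0 (Set.Ioi 0)) (nhds 0))
    (hxp : Tendsto xp (nhdsWithin 0 (Set.Ioi 0)) (nhds 0)) :
    Tendsto (fun t => (xp t - xm t) * t ^ (-(1/2) : ℝ))
      (nhdsWithin 0 (Set.Ioi 0)) (nhds (2 * Real.sqrt (2/(κ - lam)))) := by
  set μ := κ - lam with hμdef
  have hμ : 0 < μ := sub_pos.mpr hlamκ
  set h : ℝ → ℝ := fun x => f x - g x with hhdef
  -- basic differentiability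
  have hfd : Differentiable ℝ f := hf.differentiable (by norm_num)
  have hgd : Differentiable ℝ g := hg.differentiable (by norm_num)
  have hhd : Differentiable ℝ h := hfd.sub hgd
  have hf' : ContDiff ℝ 1 (deriv f) := by
    have := (contDiff_succ_iff_deriv (n := 1)).mp (by exact_mod_cast hf)
    exact this.2.2
  have hg' : ContDiff ℝ 1 (deriv g) := by
    have := (contDiff_succ_iff_deriv (n := 1)).mp (by exact_mod_cast hg)
    exact this.2.2
  have hderivh : deriv h = fun x => deriv f x - deriv g x := by
    funext x; exact deriv_sub (hfd x) (hgd x)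
  have hderivh0 : deriv h 0 = 0 := by rw [hderivh]; simp [hf1, hg1]
  have hderiv2 : HasDerivAt (deriv h) μ 0 := by
    rw [hderivh]
    have h1 : HasDerivAt (deriv f) κ 0 := by
      have := (hf'.differentiable one_ne_zero 0).hasDerivAt
      rwa [hf2] at this
    have h2 : HasDerivAt (deriv g) lam 0 := by
      have := (hg'.differentiable one_ne_zero 0).hasDerivAt
      rwa [hg2] at this
    exact h1.sub h2
  -- slope limit : deriv h x / x → μ
  have hslope : Tendsto (fun x => deriv h x / x) (nhdsWithin 0 {0}ᶜ) (nhds μ) := by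
    have := hasDerivAt_iff_tendsto_slope.mp hderiv2
    refine this.congr fun x => ?_
    simp [slope_def_field, hderivh0, div_eq_mul_inv, mul_comm]
  -- L'Hôpital : h x / x^2 → μ/2
  have hL : Tendsto (fun x => h x / x ^ 2) (nhdsWithin 0 {0}ᶜ) (nhds (μ / 2)) := by
    apply HasDerivAt.lhopital_zero_nhdsNE (f' := fun x => deriv h x) (g' := fun x => 2 * x)
    · exact Eventually.of_forall fun x => (hhd x).hasDerivAt
    · refine Eventually.of_forall fun x => ?_
      simpa using hasDerivAt_pow 2 x
    · filter_upwards [self_mem_nhdsWithin] with x hx0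
      simpa using hx0
    · have : Tendsto h (nhds 0) (nhds (h 0)) := hhd.continuous.tendsto 0
      rw [show h 0 = 0 by simp [hhdef, hf0, hg0]] at this
      exact this.mono_left nhdsWithin_le_nhds
    · have : Tendsto (fun x : ℝ => x ^ 2) (nhds 0) (nhds 0) := by
        simpa using (continuous_pow 2).tendsto (0 : ℝ)
      exact this.mono_left nhdsWithin_le_nhds
    · have : Tendsto (fun x => deriv h x / x / 2) (nhdsWithin 0 {0}ᶜ) (nhds (μ / 2)) :=
        hslope.div_const 2
      refine this.congr fun x => ?_
      rw [div_div]; ring_nf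
  -- transfer through xp and xm
  have hxp' : Tendsto xp (nhdsWithin 0 (Set.Ioi 0)) (nhdsWithin 0 {0}ᶜ) := by
    rw [tendsto_nhdsWithin_iff]
    exact ⟨hxp, hx.mono fun t ht => ht.2.1.ne'⟩
  have hxm' : Tendsto xm (nhdsWithin 0 (Set.Ioi 0)) (nhdsWithin 0 {0}ᶜ) := by
    rw [tendsto_nhdsWithin_iff]
    exact ⟨hxm, hx.mono fun t ht => ht.1.ne⟩
  have key : ∀ y : ℝ → ℝ, Tendsto y (nhdsWithin 0 (Set.Ioi 0)) (nhdsWithin 0 {0}ᶜ) →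
      (∀ᶠ t in nhdsWithin 0 (Set.Ioi 0), f (y t) = g (y t) + t) →
      Tendsto (fun t => Real.sqrt ((y t) ^ 2 / t)) (nhdsWithin 0 (Set.Ioi 0))
        (nhds (Real.sqrt (2 / μ))) := by
    intro y hy hyeq
    have h1 : Tendsto (fun t => h (y t) / (y t) ^ 2) (nhdsWithin 0 (Set.Ioi 0))
        (nhds (μ / 2)) := hL.comp hy
    have h2 : Tendsto (fun t => t / (y t) ^ 2) (nhdsWithin 0 (Set.Ioi 0)) (nhds (μ / 2)) := by
      refine h1.congr' ?_
      filter_upwards [hyeq] with t ht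
      simp [hhdef, ht]
    have h3 : Tendsto (fun t => (t / (y t) ^ 2)⁻¹) (nhdsWithin 0 (Set.Ioi 0))
        (nhds ((μ / 2)⁻¹)) := h2.inv₀ (by positivity)
    have h4 : Tendsto (fun t => (y t) ^ 2 / t) (nhdsWithin 0 (Set.Ioi 0)) (nhds (2 / μ)) := by
      rw [show (μ / 2)⁻¹ = 2 / μ by rw [inv_div]] at h3
      refine h3.congr fun t => ?_
      rw [inv_div]
    exact (Real.continuous_sqrt.tendsto _).comp h4
  have hrw : ∀ᶠ t in nhdsWithin 0 (Set.Ioi 0), ∀ z : ℝ,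
      Real.sqrt (z ^ 2 / t) = |z| * t ^ (-(1/2) : ℝ) := by
    filter_upwards [self_mem_nhdsWithin] with t ht z
    have ht' : (0:ℝ) < t := ht
    rw [Real.sqrt_div (sq_nonneg z), Real.sqrt_sq_eq_abs, Real.rpow_neg ht'.le,
      ← Real.sqrt_eq_rpow, div_eq_mul_inv]
  have hxpeq : ∀ᶠ t in nhdsWithin 0 (Set.Ioi 0), f (xp t) = g (xp t) + t :=
    hx.mono fun t ht => ht.2.2.2
  have hxmeq : ∀ᶠ t in nhdsWithin 0 (Set.Ioi 0), f (xm t) = g (xm t) + t :=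
    hx.mono fun t ht => ht.2.2.1
  have A : Tendsto (fun t => xp t * t ^ (-(1/2) : ℝ)) (nhdsWithin 0 (Set.Ioi 0))
      (nhds (Real.sqrt (2 / μ))) := by
    refine (key xp hxp' hxpeq).congr' ?_
    filter_upwards [hrw, hx] with t ht hxt
    rw [ht (xp t), abs_of_pos hxt.2.1]
  have B : Tendsto (fun t => xm t * t ^ (-(1/2) : ℝ)) (nhdsWithin 0 (Set.Ioi 0))
      (nhds (-Real.sqrt (2 / μ))) := by
    have := (key xm hxm' hxmeq).neg
    refine this.congr' ?_
    filter_upwards [hrw, hx] with t ht hxt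
    rw [ht (xm t), abs_of_neg hxt.1]; ring
  have := A.sub B
  rw [sub_neg_eq_add] at this
  have h2s : Real.sqrt (2 / μ) + Real.sqrt (2 / μ) = 2 * Real.sqrt (2 / (κ - lam)) := by
    rw [← hμdef]; ring
  rw [h2s] at this
  refine this.congr fun t => ?_
  ring
end

section
/- Let h : (0,∞) → ℝ and suppose there are constants γ₁ > 0, A > 0, t₁ > 0 such that h(t) ≥ γ₁ t^{3/2} and h(t) ≤ A for all t ∈ (0, t₁]. Set h_n = (c · ln n / n)^{2/3} with c > 5A/(3γ₁). Then lim_{n→∞} n^{5/3} ∫_{h_n}^{t₁} (1 − h(t)/A)^{n−2} dt = 0. -/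
open MeasureTheory Filter Real

theorem stmt8 (h : ℝ → ℝ) (γ₁ A t₁ c : ℝ) (hγ : 0 < γ₁) (hA : 0 < A) (ht₁ : 0 < t₁)
    (hlow : ∀ t ∈ Set.Ioc (0:ℝ) t₁, γ₁ * t ^ (3/2 : ℝ) ≤ h t)
    (hup : ∀ t ∈ Set.Ioc (0:ℝ) t₁, h t ≤ A)
    (hc : 5*A/(3*γ₁) < c) :
    Tendsto (fun n : ℕ => (n:ℝ)^(5/3 : ℝ) *
      ∫ t in ((c * Real.log n / n) ^ (2/3 : ℝ))..t₁, (1 - h t / A)^(n-2))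
      atTop (nhds 0) := by
  have hc0 : 0 < c := lt_trans (by positivity) hc
  set K : ℝ := γ₁ * c / A with hKdef
  have hK : 5/3 < K := by
    rw [hKdef, lt_div_iff₀ hA]
    rw [div_lt_iff₀ (by positivity)] at hc
    nlinarith
  set b : ℕ → ℝ := fun n => c * Real.log n / n with hbdef
  -- b n → 0
  have hb0 : Tendsto b atTop (nhds 0) := by
    have h1 : Tendsto (fun x : ℝ => Real.log x / x) atTop (nhds 0) :=
      Real.isLittleO_log_id_atTop.tendsto_div_nhds_zero
    have h2 : Tendsto (fun n : ℕ => Real.log n / n) atTop (nhds 0) :=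
      h1.comp tendsto_natCast_atTop_atTop
    have := h2.const_mul c
    simpa [hbdef, mul_div_assoc] using this
  -- h_n → 0
  have hhn0 : Tendsto (fun n : ℕ => b n ^ (2/3 : ℝ)) atTop (nhds 0) := by
    have hcont : ContinuousAt (fun x : ℝ => x ^ (2/3 : ℝ)) 0 :=
      Real.continuousAt_rpow_const 0 (2/3) (Or.inr (by norm_num))
    have := hcont.tendsto.comp hb0
    simpa [Function.comp_def, Real.zero_rpow (by norm_num : (2/3:ℝ) ≠ 0)] using this
  -- dominating sequence
  set g : ℕ → ℝ := fun n => t₁ * Real.exp (Real.log n * (5/3 - (1 - 2/(n:ℝ)) * K)) with hgdef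
  have hg0 : Tendsto g atTop (nhds 0) := by
    have ha : Tendsto (fun n : ℕ => 5/3 - (1 - 2/(n:ℝ)) * K) atTop (nhds (5/3 - K)) := by
      have h2n : Tendsto (fun n : ℕ => 2/(n:ℝ)) atTop (nhds 0) :=
        tendsto_const_div_atTop_nhds_zero_nat 2
      have : Tendsto (fun n : ℕ => (1 - 2/(n:ℝ)) * K) atTop (nhds ((1 - 0) * K)) :=
        (tendsto_const_nhds.sub h2n).mul_const K
      simpa using tendsto_const_nhds.sub this
    have hlog : Tendsto (fun n : ℕ => Real.log n) atTop atTop :=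
      Real.tendsto_log_atTop.comp tendsto_natCast_atTop_atTop
    have hprod : Tendsto (fun n : ℕ => Real.log n * (5/3 - (1 - 2/(n:ℝ)) * K)) atTop atBot :=
      hlog.atTop_mul_neg (by linarith) ha
    have := (Real.tendsto_exp_atBot.comp hprod).const_mul t₁
    simpa [hgdef] using this
  refine squeeze_zero_norm' ?_ hg0
  -- eventual conditions
  have ev1 : ∀ᶠ n : ℕ in atTop, 2 ≤ n := eventually_ge_atTop 2
  have ev2 : ∀ᶠ n : ℕ in atTop, b n ^ (2/3 : ℝ) ≤ t₁ :=
    (hhn0.eventually_lt_const ht₁).mono fun n hn => hn.le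
  have ev3 : ∀ᶠ n : ℕ in atTop, γ₁ * b n / A ≤ 1 := by
    have : Tendsto (fun n : ℕ => γ₁ * b n / A) atTop (nhds 0) := by
      simpa using (hb0.const_mul γ₁).div_const A
    exact (this.eventually_lt_const one_pos).mono fun n hn => hn.le
  filter_upwards [ev1, ev2, ev3] with n hn2 ht1b hbase
  have hn1 : (1:ℝ) ≤ (n:ℝ) := by exact_mod_cast Nat.one_le_of_lt hn2
  have hnpos : (0:ℝ) < (n:ℝ) := lt_of_lt_of_le one_pos hn1
  have hlogn : 0 ≤ Real.log n := Real.log_nonneg hn1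
  have hbn : 0 ≤ b n := by
    have : 0 ≤ c * Real.log n := mul_nonneg hc0.le hlogn
    exact div_nonneg this hnpos.le
  have hhn : 0 ≤ b n ^ (2/3 : ℝ) := Real.rpow_nonneg hbn _
  set C : ℝ := 1 - γ₁ * b n / A with hCdef
  have hC0 : 0 ≤ C := by rw [hCdef]; linarith
  -- pointwise bound on the integrand
  have hptw : ∀ t ∈ Set.uIoc (b n ^ (2/3 : ℝ)) t₁, ‖(1 - h t / A)^(n-2)‖ ≤ C^(n-2) := by
    intro t ht
    rw [Set.uIoc_of_le ht1b] at ht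
    have ht0 : 0 < t := lt_of_le_of_lt hhn ht.1
    have tmem : t ∈ Set.Ioc (0:ℝ) t₁ := ⟨ht0, ht.2⟩
    have hA1 : h t ≤ A := hup t tmem
    have hA2 : γ₁ * t ^ (3/2 : ℝ) ≤ h t := hlow t tmem
    have hrw : (b n ^ (2/3 : ℝ)) ^ (3/2 : ℝ) = b n := by
      rw [← Real.rpow_mul hbn]
      norm_num
    have htpow : b n ≤ t ^ (3/2 : ℝ) := by
      rw [← hrw]
      exact Real.rpow_le_rpow hhn ht.1.le (by norm_num)
    have hht : γ₁ * b n ≤ h t :=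
      le_trans (by nlinarith) hA2
    have hbase0 : 0 ≤ 1 - h t / A := by
      have : h t / A ≤ 1 := (div_le_one hA).mpr hA1
      linarith
    have hbaseC : 1 - h t / A ≤ C := by
      rw [hCdef]
      have : γ₁ * b n / A ≤ h t / A := by gcongr
      linarith
    calc ‖(1 - h t / A)^(n-2)‖ = (1 - h t / A)^(n-2) := by
          rw [Real.norm_eq_abs, abs_pow, abs_of_nonneg hbase0]
      _ ≤ C^(n-2) := pow_le_pow_left₀ hbase0 hbaseC _
  have hint : ‖∫ t in (b n ^ (2/3 : ℝ))..t₁, (1 - h t / A)^(n-2)‖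
      ≤ C^(n-2) * |t₁ - b n ^ (2/3 : ℝ)| :=
    intervalIntegral.norm_integral_le_of_norm_le_const hptw
  -- assemble
  have habs : |t₁ - b n ^ (2/3 : ℝ)| ≤ t₁ := by
    rw [abs_of_nonneg (by linarith)]; linarith
  have hCexp : C ^ (n-2) ≤ Real.exp (-(((n:ℝ) - 2) * (γ₁ * b n / A))) := by
    have h1 : C ≤ Real.exp (-(γ₁ * b n / A)) := by
      have := Real.add_one_le_exp (-(γ₁ * b n / A))
      rw [hCdef]; linarith
    calc C ^ (n-2) ≤ Real.exp (-(γ₁ * b n / A)) ^ (n-2) := pow_le_pow_left₀ hC0 h1 _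
      _ = Real.exp (((n:ℕ) - 2 : ℕ) * (-(γ₁ * b n / A))) := (Real.exp_nat_mul _ _).symm
      _ = Real.exp (-(((n:ℝ) - 2) * (γ₁ * b n / A))) := by
          rw [Nat.cast_sub hn2]; push_cast; ring_nf
  have hexp_eq : (n:ℝ)^(5/3:ℝ) * Real.exp (-(((n:ℝ) - 2) * (γ₁ * b n / A)))
      = Real.exp (Real.log n * (5/3 - (1 - 2/(n:ℝ)) * K)) := by
    rw [Real.rpow_def_of_pos hnpos, ← Real.exp_add]
    congr 1
    rw [hbdef, hKdef]
    field_simp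
    ring
  have hCexp' : 0 ≤ C ^ (n-2) := pow_nonneg hC0 _
  calc ‖(n:ℝ)^(5/3:ℝ) * ∫ t in (b n ^ (2/3 : ℝ))..t₁, (1 - h t / A)^(n-2)‖
      = (n:ℝ)^(5/3:ℝ) * ‖∫ t in (b n ^ (2/3 : ℝ))..t₁, (1 - h t / A)^(n-2)‖ := by
        rw [norm_mul, Real.norm_of_nonneg (Real.rpow_nonneg hnpos.le _)]
    _ ≤ (n:ℝ)^(5/3:ℝ) * (C^(n-2) * t₁) := by
        apply mul_le_mul_of_nonneg_left _ (Real.rpow_nonneg hnpos.le _)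
        exact le_trans hint (mul_le_mul_of_nonneg_left habs hCexp')
    _ ≤ (n:ℝ)^(5/3:ℝ) * (Real.exp (-(((n:ℝ) - 2) * (γ₁ * b n / A))) * t₁) := by
        apply mul_le_mul_of_nonneg_left _ (Real.rpow_nonneg hnpos.le _)
        exact mul_le_mul_of_nonneg_right hCexp ht₁.le
    _ = g n := by rw [hgdef, ← mul_assoc, hexp_eq]; ring
end

section
/- Let w, κ : S¹ → (0, ∞) be continuous, let A > 0, and suppose A(u, t) is a function continuous in (u, t) with A(u,t)/t → w(u) uniformly in u as t → 0⁺, 0 < A(u,t) ≤ A, and A(u,t) ≥ ĉ t for some ĉ > 0 and all small t. Then lim_{n→∞} (n choose 2) ∫₀^{h_n} (1 − A(u,t)/A)^{n−2} · t dt = 1/(2 w(u)²) for each u ∈ S¹, where h_n = c ln n / n with c > 0 sufficiently large. -/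
open MeasureTheory Filter Real

lemma integral_exact (a : ℝ) (ha : a ≠ 0) (m : ℕ) (h : ℝ) :
    ∫ t in (0:ℝ)..h, (1 - a*t)^m * t =
      (((1-a*h)^(m+2)/((m:ℝ)+2) - (1-a*h)^(m+1)/((m:ℝ)+1)) - (1/((m:ℝ)+2) - 1/((m:ℝ)+1)))/a^2 := by
  have key : ∀ t : ℝ, HasDerivAt
      (fun t => ((1-a*t)^(m+2)/((m:ℝ)+2) - (1-a*t)^(m+1)/((m:ℝ)+1))/a^2)
      ((1-a*t)^m * t) t := by
    intro t
    have hs : HasDerivAt (fun t : ℝ => 1 - a*t) (-a) t := by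
      simpa using ((hasDerivAt_id t).const_mul a).const_sub 1
    have h1 : HasDerivAt (fun t : ℝ => (1-a*t)^(m+2)) (((m:ℝ)+2) * (1-a*t)^(m+1) * (-a)) t := by
      have := hs.fun_pow (m+2)
      simpa using this
    have h2 : HasDerivAt (fun t : ℝ => (1-a*t)^(m+1)) (((m:ℝ)+1) * (1-a*t)^m * (-a)) t := by
      have := hs.fun_pow (m+1)
      simpa using this
    have H := ((h1.div_const ((m:ℝ)+2)).fun_sub (h2.div_const ((m:ℝ)+1))).div_const (a^2)
    convert H using 1
    · rfl
    · rfl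
    have hm2 : ((m:ℝ)+2) ≠ 0 := by positivity
    have hm1 : ((m:ℝ)+1) ≠ 0 := by positivity
    field_simp
    ring
  rw [intervalIntegral.integral_eq_sub_of_hasDerivAt (fun t _ => key t)
    (by apply Continuous.intervalIntegrable; continuity)]
  simp
  ring

lemma hn_tendsto (c : ℝ) : Tendsto (fun n : ℕ => c * Real.log n / n) atTop (nhds 0) := by
  have h1 : Tendsto (fun x : ℝ => Real.log x / x) atTop (nhds 0) :=
    Real.isLittleO_log_id_atTop.tendsto_div_nhds_zero
  have h2 : Tendsto (fun n : ℕ => Real.log n / n) atTop (nhds 0) :=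
    h1.comp tendsto_natCast_atTop_atTop
  have := h2.const_mul c
  simpa [mul_div_assoc] using this

lemma tendsto_J (a c : ℝ) (ha : 0 < a) (hac : 4 ≤ a * c) :
    Tendsto (fun n : ℕ => (n.choose 2 : ℝ) *
      ∫ t in (0:ℝ)..(c * Real.log n / n), (1 - a*t)^(n-2) * t) atTop (nhds (1/(2*a^2))) := by
  set h : ℕ → ℝ := fun n => c * Real.log n / n with hh
  set X : ℕ → ℝ := fun n => 1 - a * h n with hX
  have hsmall : ∀ᶠ n : ℕ in atTop, a * h n ≤ 1 := by
    have := (hn_tendsto c).const_mul a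
    rw [mul_zero] at this
    filter_upwards [this.eventually (eventually_le_nhds (by norm_num : (0:ℝ) < 1))] with n hn
    exact hn
  have hfacts : ∀ᶠ n : ℕ in atTop, 2 ≤ n ∧ a * h n ≤ 1 := by
    filter_upwards [eventually_ge_atTop 2, hsmall] with n h1 h2; exact ⟨h1, h2⟩
  have hbound : ∀ n : ℕ, 2 ≤ n → a * h n ≤ 1 →
      (0 ≤ X n ∧ X n ≤ 1 ∧ (n:ℝ) * X n ^ (n-1) ≤ ((n:ℝ))⁻¹) := by
    intro n hn2 hsm
    have hnR : (2:ℝ) ≤ n := by exact_mod_cast hn2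
    have hnpos : (0:ℝ) < n := by linarith
    have hlog : 0 ≤ Real.log n := Real.log_nonneg (by linarith)
    have hh0 : 0 ≤ h n := by
      have h4 : (0:ℝ) < 4 := by norm_num
      have : 0 < a * c := lt_of_lt_of_le h4 hac
      have hc : 0 < c := by
        by_contra hcon
        push_neg at hcon
        nlinarith [mul_nonpos_of_nonneg_of_nonpos ha.le hcon]
      exact div_nonneg (mul_nonneg hc.le hlog) hnpos.le
    have hX0 : 0 ≤ X n := by simp only [hX]; linarith
    have hX1 : X n ≤ 1 := by
      simp only [hX]; nlinarith [mul_nonneg ha.le hh0]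
    refine ⟨hX0, hX1, ?_⟩
    have hexp : X n ≤ Real.exp (-(a * h n)) := by
      have := Real.add_one_le_exp (-(a * h n))
      simp only [hX]; linarith
    have hcast : ((n-1:ℕ):ℝ) = (n:ℝ) - 1 := by
      simpa using (Nat.cast_sub (show 1 ≤ n by omega) : ((n-1:ℕ):ℝ) = _)
    have hkey : 2 * Real.log n ≤ ((n:ℝ)-1) * (a * h n) := by
      have hexpand : ((n:ℝ)-1) * (a * h n) = (a*c) * (Real.log n * (((n:ℝ)-1)/n)) := by
        simp only [hh]; field_simp
      rw [hexpand]
      have hfrac : (1:ℝ)/2 ≤ ((n:ℝ)-1)/n := by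
        rw [div_le_div_iff₀ (by norm_num) hnpos]; linarith
      nlinarith [mul_le_mul_of_nonneg_left hfrac hlog]
    have hval : Real.exp (-(2 * Real.log n)) = ((n:ℝ)^2)⁻¹ := by
      rw [Real.exp_neg]
      congr 1
      rw [show (2:ℝ) * Real.log n = ((2:ℕ):ℝ) * Real.log n by norm_num,
        Real.exp_nat_mul, Real.exp_log hnpos]
    have hchain : X n ^ (n-1) ≤ ((n:ℝ)^2)⁻¹ := by
      calc X n ^ (n-1) ≤ Real.exp (-(a * h n)) ^ (n-1) := pow_le_pow_left₀ hX0 hexp _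
        _ = Real.exp (((n-1:ℕ):ℝ) * (-(a * h n))) := (Real.exp_nat_mul _ _).symm
        _ ≤ Real.exp (-(2 * Real.log n)) := by
            apply Real.exp_le_exp.2
            rw [hcast]; linarith
        _ = ((n:ℝ)^2)⁻¹ := hval
    calc (n:ℝ) * X n ^ (n-1) ≤ (n:ℝ) * ((n:ℝ)^2)⁻¹ :=
          mul_le_mul_of_nonneg_left hchain hnpos.le
      _ = ((n:ℝ))⁻¹ := by field_simp
  have heq : ∀ᶠ n : ℕ in atTop, (n.choose 2 : ℝ) *
      ∫ t in (0:ℝ)..(h n), (1 - a*t)^(n-2) * t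
      = 1/(2*a^2) * (1 + ((n:ℝ)-1) * X n ^ n - (n:ℝ) * X n ^ (n-1)) := by
    filter_upwards [eventually_ge_atTop 2] with n hn2
    rw [integral_exact a ha.ne' (n-2) (h n)]
    have e1 : n - 2 + 2 = n := by omega
    have e2 : n - 2 + 1 = n - 1 := by omega
    have c1 : ((n-2:ℕ):ℝ) = (n:ℝ) - 2 := by
      simpa using (Nat.cast_sub (show 2 ≤ n by omega) : ((n-2:ℕ):ℝ) = _)
    have cch : (n.choose 2 : ℝ) = (n:ℝ) * ((n:ℝ)-1) / 2 := by
      rw [Nat.cast_choose_two]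
    have hnR : (2:ℝ) ≤ n := by exact_mod_cast hn2
    have hn0 : (n:ℝ) ≠ 0 := by linarith
    have hn1 : (n:ℝ) - 1 ≠ 0 := by linarith
    rw [e1, e2, cch, c1]
    simp only [hX]
    have r1 : ((n:ℝ) - 2 + 2) = (n:ℝ) := by ring
    have r2 : ((n:ℝ) - 2 + 1) = (n:ℝ) - 1 := by ring
    rw [r1, r2]
    generalize (1 - a * h n) = P
    have ha2 : a^2 ≠ 0 := pow_ne_zero _ ha.ne'
    have hn1' : (-1 + (n:ℝ)) ≠ 0 := by intro hcon; apply hn1; linarith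
    field_simp [hn0, hn1, hn1', ha2]
    ring
  have hinv : Tendsto (fun n : ℕ => ((n:ℝ))⁻¹) atTop (nhds 0) := by
    simpa [one_div] using tendsto_one_div_atTop_nhds_zero_nat (𝕜 := ℝ)
  have hlim : Tendsto (fun n : ℕ => 1/(2*a^2) * (1 + ((n:ℝ)-1) * X n ^ n - (n:ℝ) * X n ^ (n-1)))
      atTop (nhds (1/(2*a^2))) := by
    have hE2 : Tendsto (fun n : ℕ => (n:ℝ) * X n ^ (n-1)) atTop (nhds 0) := by
      apply squeeze_zero' (g := fun n : ℕ => ((n:ℝ))⁻¹)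
      · filter_upwards [hfacts] with n hn
        exact mul_nonneg (Nat.cast_nonneg n) (pow_nonneg (hbound n hn.1 hn.2).1 _)
      · filter_upwards [hfacts] with n hn
        exact (hbound n hn.1 hn.2).2.2
      · exact hinv
    have hE1 : Tendsto (fun n : ℕ => ((n:ℝ)-1) * X n ^ n) atTop (nhds 0) := by
      apply squeeze_zero' (g := fun n : ℕ => ((n:ℝ))⁻¹)
      · filter_upwards [hfacts] with n hn
        obtain ⟨hX0, hX1, _⟩ := hbound n hn.1 hn.2
        have hnR : (2:ℝ) ≤ n := by exact_mod_cast hn.1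
        exact mul_nonneg (by linarith) (pow_nonneg hX0 _)
      · filter_upwards [hfacts] with n hn
        obtain ⟨hX0, hX1, hb⟩ := hbound n hn.1 hn.2
        have hnR : (2:ℝ) ≤ n := by exact_mod_cast hn.1
        calc ((n:ℝ)-1) * X n ^ n ≤ (n:ℝ) * X n ^ (n-1) := by
              have hpow : X n ^ n ≤ X n ^ (n-1) := pow_le_pow_of_le_one hX0 hX1 (by omega)
              have h1' : 0 ≤ X n ^ n := pow_nonneg hX0 n
              nlinarith [pow_nonneg hX0 (n-1)]
          _ ≤ ((n:ℝ))⁻¹ := hb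
      · exact hinv
    have hsum : Tendsto (fun n : ℕ => 1 + ((n:ℝ)-1) * X n ^ n - (n:ℝ) * X n ^ (n-1))
        atTop (nhds 1) := by
      have := (hE1.const_add 1).sub hE2
      simpa using this
    have := hsum.const_mul (1/(2*a^2))
    simpa using this
  exact Tendsto.congr' (heq.mono fun n hn => hn.symm) hlim

set_option maxHeartbeats 2000000 in
theorem stmt14 (w κ : EuclideanSpace ℝ (Fin 2) → ℝ) (A₀ : ℝ) (hA₀ : 0 < A₀)
    (A : EuclideanSpace ℝ (Fin 2) → ℝ → ℝ)
    (S : Set (EuclideanSpace ℝ (Fin 2)))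
    (hS : S = Metric.sphere (0 : EuclideanSpace ℝ (Fin 2)) 1)
    (hw : ContinuousOn w S) (hwpos : ∀ u ∈ S, 0 < w u)
    (hκ : ContinuousOn κ S) (hκpos : ∀ u ∈ S, 0 < κ u)
    (hAcont : ContinuousOn (fun p : EuclideanSpace ℝ (Fin 2) × ℝ => A p.1 p.2)
      (S ×ˢ Set.Ioi (0:ℝ)))
    (hAunif : TendstoUniformlyOn (fun t u => A u t / t) w (nhdsWithin 0 (Set.Ioi 0)) S)
    (hAbd : ∀ u ∈ S, ∀ t : ℝ, 0 < t → 0 < A u t ∧ A u t ≤ A₀)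
    (hAlin : ∃ chat > (0:ℝ), ∃ t₀ > (0:ℝ), ∀ u ∈ S, ∀ t ∈ Set.Ioc (0:ℝ) t₀, chat * t ≤ A u t) :
    ∃ c₀ > (0:ℝ), ∀ c ≥ c₀, ∀ u ∈ S,
      Tendsto (fun n : ℕ => ((n.choose 2 : ℝ) / A₀^2) *
          ∫ t in (0:ℝ)..(c * Real.log n / n), (1 - A u t / A₀)^(n-2) * t)
        atTop (nhds (1 / (2 * (w u)^2))) := by
  obtain ⟨chat, hchat, t₀, ht₀, hlin⟩ := hAlin
  refine ⟨8 * A₀ / chat, by positivity, ?_⟩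
  intro c hc u hu
  have hAu : ContinuousOn (fun t => A u t) (Set.Ioi (0:ℝ)) := by
    have hmap : Set.MapsTo (fun t : ℝ => ((u, t) : _ × ℝ)) (Set.Ioi 0) (S ×ˢ Set.Ioi (0:ℝ)) :=
      fun t ht => ⟨hu, ht⟩
    exact hAcont.comp ((continuous_const.prodMk continuous_id).continuousOn) hmap
  have hptw : Tendsto (fun t => A u t / t) (nhdsWithin 0 (Set.Ioi 0)) (nhds (w u)) :=
    hAunif.tendsto_at hu
  have hwu : 0 < w u := hwpos u hu
  have hwchat : chat ≤ w u := by
    apply ge_of_tendsto hptw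
    filter_upwards [Ioc_mem_nhdsGT_of_mem (Set.left_mem_Ico.2 ht₀)] with t ht
    rw [le_div_iff₀ ht.1]
    exact hlin u hu t ht
  rw [Metric.tendsto_atTop]
  intro ε' hε'
  set L := 1 / (2 * (w u)^2) with hL
  -- choose ε
  have hg : ContinuousAt (fun x : ℝ => 1/(2*x^2)) (w u) := by
    apply ContinuousAt.div continuousAt_const
    · exact (continuous_const.mul (continuous_pow 2)).continuousAt
    · positivity
  obtain ⟨δ, hδ, hδball⟩ := Metric.continuousAt_iff.1 hg (ε'/2) (by linarith)
  set ε := min (δ/2) (w u / 2) with hε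
  have hε0 : 0 < ε := lt_min (by linarith) (by linarith)
  have hεδ : ε < δ := lt_of_le_of_lt (min_le_left _ _) (by linarith)
  have hεw : ε ≤ w u / 2 := min_le_right _ _
  have hgm : |1/(2*(w u - ε)^2) - L| < ε'/2 := by
    have hd : dist (w u - ε) (w u) < δ := by
      rw [Real.dist_eq, abs_of_nonpos (by linarith)]
      linarith
    have := hδball hd
    rwa [Real.dist_eq] at this
  have hgp : |1/(2*(w u + ε)^2) - L| < ε'/2 := by
    have hd : dist (w u + ε) (w u) < δ := by
      rw [Real.dist_eq, abs_of_nonneg (by linarith)]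
      linarith
    have := hδball hd
    rwa [Real.dist_eq] at this
  -- pointwise control of A near 0
  have hev : {t : ℝ | |A u t / t - w u| < ε} ∈ nhdsWithin (0:ℝ) (Set.Ioi 0) := by
    have := hptw.eventually (Metric.ball_mem_nhds (w u) hε0)
    filter_upwards [this] with t ht
    rwa [Real.dist_eq] at ht
  obtain ⟨t₁, ht₁pos, ht₁sub⟩ := mem_nhdsGT_iff_exists_Ioc_subset.1 hev
  have ht₁pos' : (0:ℝ) < t₁ := ht₁pos
  -- the two comparison slopes
  set am : ℝ := (w u - ε)/A₀ with ham
  set ap : ℝ := (w u + ε)/A₀ with hap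
  have hwe : chat/2 ≤ w u - ε := by linarith
  have hwe0 : 0 < w u - ε := by linarith
  have hwp0 : 0 < w u + ε := by linarith
  have ham0 : 0 < am := by rw [ham]; positivity
  have hap0 : 0 < ap := by rw [hap]; positivity
  have hamap : am ≤ ap := by
    rw [ham, hap]
    gcongr
    linarith
  have hacm : 4 ≤ am * c := by
    have hc0 : (0:ℝ) < 8 * A₀ / chat := by positivity
    have e : (chat/2/A₀) * (8*A₀/chat) = 4 := by field_simp; ring
    calc (4:ℝ) = (chat/2/A₀) * (8*A₀/chat) := e.symm
      _ ≤ am * c := by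
          apply mul_le_mul _ hc (by positivity) ham0.le
          rw [ham]
          gcongr
  have hacp : 4 ≤ ap * c := by
    calc (4:ℝ) ≤ am * c := hacm
      _ ≤ ap * c := by
          apply mul_le_mul_of_nonneg_right hamap
          nlinarith [ham0]
  -- limits of the comparison sequences
  have hJm := (tendsto_J am c ham0 hacm).const_mul ((A₀^2)⁻¹)
  have hJp := (tendsto_J ap c hap0 hacp).const_mul ((A₀^2)⁻¹)
  have hvm : (A₀^2)⁻¹ * (1/(2*am^2)) = 1/(2*(w u - ε)^2) := by
    rw [ham, div_pow]
    field_simp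
  have hvp : (A₀^2)⁻¹ * (1/(2*ap^2)) = 1/(2*(w u + ε)^2) := by
    rw [hap, div_pow]
    field_simp
  rw [hvm] at hJm
  rw [hvp] at hJp
  -- eventual facts
  have hhalf := half_pos hε'
  obtain ⟨Nm, hNm⟩ := Metric.tendsto_atTop.1 hJm (ε'/2) hhalf
  obtain ⟨Np, hNp⟩ := Metric.tendsto_atTop.1 hJp (ε'/2) hhalf
  have hJmev : ∀ᶠ n : ℕ in atTop, dist ((A₀^2)⁻¹ * ((n.choose 2 : ℝ) *
      ∫ t in (0:ℝ)..(c * Real.log n / n), (1 - am*t)^(n-2) * t)) (1/(2*(w u - ε)^2)) < ε'/2 :=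
    eventually_atTop.2 ⟨Nm, hNm⟩
  have hJpev : ∀ᶠ n : ℕ in atTop, dist ((A₀^2)⁻¹ * ((n.choose 2 : ℝ) *
      ∫ t in (0:ℝ)..(c * Real.log n / n), (1 - ap*t)^(n-2) * t)) (1/(2*(w u + ε)^2)) < ε'/2 :=
    eventually_atTop.2 ⟨Np, hNp⟩
  have hsmallev : ∀ᶠ n : ℕ in atTop, c * Real.log n / n ≤ min t₁ (1/ap) := by
    apply (hn_tendsto c).eventually (eventually_le_nhds _)
    exact lt_min ht₁pos' (by positivity)
  have hbig : ∀ᶠ n : ℕ in atTop,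
      dist (((n.choose 2 : ℝ) / A₀^2) *
        ∫ t in (0:ℝ)..(c * Real.log n / n), (1 - A u t / A₀)^(n-2) * t) L < ε' := by
    filter_upwards [hJmev, hJpev, hsmallev, eventually_ge_atTop 1] with n hJm' hJp' hsm hn1
    set hn := c * Real.log n / n with hhn
    have hn1R : (1:ℝ) ≤ n := by exact_mod_cast hn1
    have hnpos : (0:ℝ) < n := by linarith
    have hc0 : 0 < c := by
      have : (0:ℝ) < 8 * A₀ / chat := by positivity
      linarith
    have hhn0 : 0 ≤ hn := by
      rw [hhn]
      exact div_nonneg (mul_nonneg hc0.le (Real.log_nonneg hn1R)) hnpos.le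
    have hsmt : hn ≤ t₁ := le_trans hsm (min_le_left _ _)
    have hsma : ap * hn ≤ 1 := by
      have h2 : hn ≤ 1/ap := le_trans hsm (min_le_right _ _)
      rw [le_div_iff₀ hap0] at h2
      linarith
    -- integrability
    have hcont_low : Continuous fun t : ℝ => (1 - ap*t)^(n-2) * t := by
      exact ((continuous_const.sub (continuous_const.mul continuous_id)).pow _).mul continuous_id
    have hcont_hi : Continuous fun t : ℝ => (1 - am*t)^(n-2) * t := by
      exact ((continuous_const.sub (continuous_const.mul continuous_id)).pow _).mul continuous_id
    have hintA : IntervalIntegrable (fun t => (1 - A u t / A₀)^(n-2) * t) volume 0 hn := by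
      rw [intervalIntegrable_iff_integrableOn_Ioc_of_le hhn0]
      have hcont : ContinuousOn (fun t => (1 - A u t / A₀)^(n-2) * t) (Set.Ioc 0 hn) := by
        apply ContinuousOn.mul _ continuousOn_id
        apply ContinuousOn.pow
        exact continuousOn_const.sub ((hAu.mono Set.Ioc_subset_Ioi_self).div_const A₀)
      apply MeasureTheory.Integrable.mono' (g := fun t : ℝ => t)
        (continuous_id.integrableOn_Ioc)
        (hcont.aestronglyMeasurable measurableSet_Ioc)
      filter_upwards [ae_restrict_mem measurableSet_Ioc] with t ht
      obtain ⟨hApos, hAle⟩ := hAbd u hu t ht.1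
      have h01 : 0 ≤ 1 - A u t / A₀ := by
        have : A u t / A₀ ≤ 1 := (div_le_one hA₀).2 hAle
        linarith
      have h11 : 1 - A u t / A₀ ≤ 1 := by
        have : 0 < A u t / A₀ := div_pos hApos hA₀
        linarith
      rw [Real.norm_eq_abs, abs_mul, abs_of_nonneg (pow_nonneg h01 _), abs_of_nonneg ht.1.le]
      calc (1 - A u t / A₀)^(n-2) * t ≤ 1 * t :=
            mul_le_mul_of_nonneg_right (pow_le_one₀ h01 h11) ht.1.le
        _ = t := one_mul t
    -- pointwise bounds on Icc
    have hptbd : ∀ t ∈ Set.Icc (0:ℝ) hn,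
        (1 - ap*t)^(n-2) * t ≤ (1 - A u t / A₀)^(n-2) * t ∧
        (1 - A u t / A₀)^(n-2) * t ≤ (1 - am*t)^(n-2) * t := by
      rintro t ⟨ht0, hth⟩
      rcases eq_or_lt_of_le ht0 with h0 | h0
      · constructor <;> simp [← h0]
      · have htt1 : t ∈ Set.Ioc 0 t₁ := ⟨h0, le_trans hth hsmt⟩
        have habs : |A u t / t - w u| < ε := ht₁sub htt1
        obtain ⟨hlo, hhi⟩ := abs_lt.1 habs
        have hAub : A u t ≤ (w u + ε) * t := by
          have : A u t / t < w u + ε := by linarith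
          rw [div_lt_iff₀ h0] at this
          linarith [this]
        have hAlb : (w u - ε) * t ≤ A u t := by
          have : w u - ε < A u t / t := by linarith
          rw [lt_div_iff₀ h0] at this
          linarith [this]
        obtain ⟨hApos, hAle⟩ := hAbd u hu t h0
        have hb1 : A u t / A₀ ≤ ap * t := by
          rw [div_le_iff₀ hA₀]
          have e : ap * t * A₀ = (w u + ε) * t := by rw [hap]; field_simp
          rw [e]; exact hAub
        have hb2 : am * t ≤ A u t / A₀ := by
          rw [le_div_iff₀ hA₀]
          have e : am * t * A₀ = (w u - ε) * t := by rw [ham]; field_simp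
          rw [e]; exact hAlb
        have hge0 : 0 ≤ 1 - ap * t := by
          have : ap * t ≤ ap * hn := mul_le_mul_of_nonneg_left hth hap0.le
          linarith
        have hge0' : 0 ≤ 1 - A u t / A₀ := by
          have : A u t / A₀ ≤ 1 := (div_le_one hA₀).2 hAle
          linarith
        constructor
        · exact mul_le_mul_of_nonneg_right (pow_le_pow_left₀ hge0 (by linarith) _) ht0
        · exact mul_le_mul_of_nonneg_right (pow_le_pow_left₀ hge0' (by linarith) _) ht0
    have hIlow : (∫ t in (0:ℝ)..hn, (1 - ap*t)^(n-2) * t)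
        ≤ ∫ t in (0:ℝ)..hn, (1 - A u t / A₀)^(n-2) * t := by
      apply intervalIntegral.integral_mono_on hhn0 (hcont_low.intervalIntegrable _ _) hintA
      exact fun t ht => (hptbd t ht).1
    have hIhi : (∫ t in (0:ℝ)..hn, (1 - A u t / A₀)^(n-2) * t)
        ≤ ∫ t in (0:ℝ)..hn, (1 - am*t)^(n-2) * t := by
      apply intervalIntegral.integral_mono_on hhn0 hintA (hcont_hi.intervalIntegrable _ _)
      exact fun t ht => (hptbd t ht).2
    -- assemble
    have hch0 : (0:ℝ) ≤ (n.choose 2 : ℝ) / A₀^2 := by positivity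
    have hm1 := mul_le_mul_of_nonneg_left hIlow hch0
    have hm2 := mul_le_mul_of_nonneg_left hIhi hch0
    have eL : ((n.choose 2 : ℝ) / A₀^2) * (∫ t in (0:ℝ)..hn, (1 - ap*t)^(n-2) * t)
        = (A₀^2)⁻¹ * ((n.choose 2 : ℝ) * ∫ t in (0:ℝ)..hn, (1 - ap*t)^(n-2) * t) := by ring
    have eH : ((n.choose 2 : ℝ) / A₀^2) * (∫ t in (0:ℝ)..hn, (1 - am*t)^(n-2) * t)
        = (A₀^2)⁻¹ * ((n.choose 2 : ℝ) * ∫ t in (0:ℝ)..hn, (1 - am*t)^(n-2) * t) := by ring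
    rw [Real.dist_eq] at hJm' hJp'
    rw [Real.dist_eq]
    obtain ⟨hJm1, hJm2⟩ := abs_lt.1 hJm'
    obtain ⟨hJp1, hJp2⟩ := abs_lt.1 hJp'
    obtain ⟨hgm1, hgm2⟩ := abs_lt.1 hgm
    obtain ⟨hgp1, hgp2⟩ := abs_lt.1 hgp
    rw [abs_lt]
    rw [eL] at hm1
    rw [eH] at hm2
    constructor
    · linarith
    · linarith
  obtain ⟨N, hN⟩ := eventually_atTop.1 hbig
  exact ⟨N, hN⟩
end

section
/- For ω > 0 and c > 3/ω, with h_n = c·ln n/n, one has lim_{n→∞} n² ∫₀^{h_n} t (1 − ω t)^{n−2} dt = 1/ω². -/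
open MeasureTheory Filter Real

set_option maxHeartbeats 1000000 in
theorem stmt15 (ω c : ℝ) (hω : 0 < ω) (hc : 3 / ω < c) :
    Tendsto (fun n : ℕ => (n:ℝ)^2 *
        ∫ t in (0:ℝ)..(c * Real.log n / n), t * (1 - ω * t)^(n-2))
      atTop (nhds (1 / ω^2)) := by
  have hωne : ω ≠ 0 := ne_of_gt hω
  have ha : 3 < ω * c := by
    rw [div_lt_iff₀ hω] at hc; linarith
  have hcpos : 0 < c := lt_trans (div_pos (by norm_num) hω) hc
  set h : ℕ → ℝ := fun n => c * Real.log n / n with hh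
  have hpos : ∀ n : ℕ, 1 ≤ n → 0 ≤ h n := by
    intro n hn
    have : (0:ℝ) ≤ Real.log n := Real.log_nonneg (by exact_mod_cast hn)
    positivity
  have hto0 : Tendsto h atTop (nhds 0) := by
    have hlog : Tendsto (fun x : ℝ => Real.log x / x) atTop (nhds 0) :=
      Real.isLittleO_log_id_atTop.tendsto_div_nhds_zero
    have := (hlog.comp tendsto_natCast_atTop_atTop).const_mul c
    simpa [hh, mul_div_assoc, Function.comp] using this
  have hev : ∀ᶠ n : ℕ in atTop, ω * h n < 1 := by
    have h0 : Tendsto (fun n => ω * h n) atTop (nhds 0) := by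
      simpa using hto0.const_mul ω
    exact h0.eventually_lt_const one_pos
  -- exact formula for the integral
  have key : ∀ n : ℕ, 2 ≤ n → (n:ℝ)^2 * ∫ t in (0:ℝ)..(h n), t * (1 - ω * t)^(n-2)
      = (n:ℝ)^2/ω^2 * ((1-ω*h n)^n/n - (1-ω*h n)^(n-1)/((n:ℝ)-1) + (1/((n:ℝ)-1) - 1/n)) := by
    intro n hn
    obtain ⟨m, rfl⟩ : ∃ m, n = m + 2 := ⟨n - 2, by omega⟩
    have hm2 : ((m:ℝ)+2) ≠ 0 := by positivity
    have hm1 : ((m:ℝ)+1) ≠ 0 := by positivity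
    have hF : ∀ t : ℝ, HasDerivAt
        (fun t => ((1-ω*t)^(m+2)/((m:ℝ)+2) - (1-ω*t)^(m+1)/((m:ℝ)+1))/ω^2)
        (t * (1 - ω * t)^m) t := by
      intro t
      have hb : HasDerivAt (fun t : ℝ => 1 - ω * t) (-ω) t := by
        simpa using ((hasDerivAt_id t).const_mul ω).const_sub 1
      have h1 : HasDerivAt (fun t : ℝ => (1-ω*t)^(m+2))
          ((m+2 : ℕ) * (1-ω*t)^(m+1) * (-ω)) t := by
        simpa [Pi.pow_def] using hb.pow (m+2)
      have h2 : HasDerivAt (fun t : ℝ => (1-ω*t)^(m+1))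
          ((m+1 : ℕ) * (1-ω*t)^m * (-ω)) t := by
        simpa [Pi.pow_def] using hb.pow (m+1)
      have := ((h1.div_const ((m:ℝ)+2)).fun_sub (h2.div_const ((m:ℝ)+1))).div_const (ω^2)
      refine this.congr_deriv ?_
      push_cast
      field_simp
      ring
    have hint : (∫ t in (0:ℝ)..(h (m+2)), t * (1 - ω * t)^m)
        = ((1-ω*h (m+2))^(m+2)/((m:ℝ)+2) - (1-ω*h (m+2))^(m+1)/((m:ℝ)+1))/ω^2
          - ((1-ω*0)^(m+2)/((m:ℝ)+2) - (1-ω*0)^(m+1)/((m:ℝ)+1))/ω^2 := by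
      apply intervalIntegral.integral_eq_sub_of_hasDerivAt (fun t _ => hF t)
      apply Continuous.intervalIntegrable
      continuity
    have hsub : m + 2 - 2 = m := by omega
    have hsub1 : m + 2 - 1 = m + 1 := by omega
    rw [hsub, hint, hsub1]
    generalize (h (m+2)) = H
    have hcast : ((m+2:ℕ):ℝ) = (m:ℝ)+2 := by push_cast; ring
    rw [hcast]
    rw [mul_zero, sub_zero, one_pow, one_pow]
    have hm1' : ((m:ℝ)+2)-1 = (m:ℝ)+1 := by ring
    rw [hm1']
    field_simp
    ring
  -- A n → 1/ω²
  have hA : Tendsto (fun n : ℕ => (n:ℝ)^2/ω^2 * (1/((n:ℝ)-1) - 1/n)) atTop (nhds (1/ω^2)) := by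
    have h1 : Tendsto (fun n : ℕ => ((n:ℝ)-1)) atTop atTop :=
      tendsto_atTop_add_const_right _ (-1) tendsto_natCast_atTop_atTop
    have h2 : Tendsto (fun n : ℕ => 1 + ((n:ℝ)-1)⁻¹) atTop (nhds (1 + 0)) :=
      tendsto_const_nhds.add h1.inv_tendsto_atTop
    have h3 : Tendsto (fun n : ℕ => (1 + ((n:ℝ)-1)⁻¹) * (1/ω^2)) atTop (nhds ((1+0)*(1/ω^2))) :=
      h2.mul tendsto_const_nhds
    rw [show (1+0)*(1/ω^2) = 1/ω^2 by ring] at h3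
    apply h3.congr'
    filter_upwards [eventually_ge_atTop 2] with n hn
    have hn1 : (1:ℝ) < n := by exact_mod_cast Nat.lt_of_lt_of_le one_lt_two hn
    have hne : (n:ℝ) - 1 ≠ 0 := by linarith
    have hne0 : (n:ℝ) ≠ 0 := by positivity
    field_simp
    ring
  -- K n := n^2 (1-ωh)^{n-1} → 0
  have hK : Tendsto (fun n : ℕ => (n:ℝ)^2 * (1-ω*h n)^(n-1)) atTop (nhds 0) := by
    have hub : Tendsto (fun n : ℕ => (n:ℝ)^((2:ℝ) - 2*(ω*c)/3)) atTop (nhds 0) := by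
      have hneg : 0 < 2*(ω*c)/3 - 2 := by linarith
      have := (tendsto_rpow_neg_atTop hneg).comp tendsto_natCast_atTop_atTop
      simpa [Function.comp_def, neg_sub] using this
    apply squeeze_zero' ?_ ?_ hub
    · filter_upwards [hev, eventually_ge_atTop 1] with n h1 h2
      have hb : (0:ℝ) ≤ 1 - ω * h n := by linarith
      positivity
    · filter_upwards [hev, eventually_ge_atTop 3] with n h1 h3
      have hn0 : (0:ℝ) < n := by exact_mod_cast Nat.lt_of_lt_of_le (by norm_num) h3
      have hnn : 0 ≤ h n := hpos n (by omega)
      have hb0 : (0:ℝ) ≤ 1 - ω * h n := by linarith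
      have step1 : (1-ω*h n)^(n-1) ≤ Real.exp (-(ω*h n))^(n-1) := by
        apply pow_le_pow_left₀ hb0
        linarith [Real.add_one_le_exp (-(ω*h n))]
      have step2 : Real.exp (-(ω*h n))^(n-1) = Real.exp (-((n-1:ℕ) * (ω * h n))) := by
        rw [← Real.exp_nat_mul]; ring_nf
      have step3 : Real.exp (-((n-1:ℕ) * (ω * h n))) ≤ Real.exp (-(2*(ω*c)/3 * Real.log n)) := by
        apply Real.exp_le_exp.mpr
        rw [neg_le_neg_iff]
        have hlogn : 0 ≤ Real.log n := Real.log_nonneg (by exact_mod_cast Nat.one_le_of_lt h3)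
        have hc1 : ((n-1:ℕ):ℝ) * (ω * h n) = ω * c * Real.log n * ((n-1:ℕ):ℝ)/n := by
          rw [hh]; field_simp
        rw [hc1]
        have hfrac : (2:ℝ)/3 ≤ ((n-1:ℕ):ℝ)/n := by
          rw [div_le_div_iff₀ (by norm_num) hn0]
          have hcast : ((n-1:ℕ):ℝ) = (n:ℝ) - 1 := by
            push_cast [Nat.cast_sub (by omega : 1 ≤ n)]; ring
          rw [hcast]
          have : (3:ℝ) ≤ n := by exact_mod_cast h3
          linarith
        calc 2*(ω*c)/3 * Real.log n = (ω * c * Real.log n) * (2/3) := by ring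
          _ ≤ (ω * c * Real.log n) * (((n-1:ℕ):ℝ)/n) := by
              apply mul_le_mul_of_nonneg_left hfrac
              positivity
          _ = ω * c * Real.log n * ((n-1:ℕ):ℝ)/n := by ring
      have step4 : Real.exp (-(2*(ω*c)/3 * Real.log n)) = (n:ℝ)^(-(2*(ω*c)/3) : ℝ) := by
        rw [Real.rpow_def_of_pos hn0]; ring_nf
      calc (n:ℝ)^2 * (1-ω*h n)^(n-1)
          ≤ (n:ℝ)^2 * (n:ℝ)^(-(2*(ω*c)/3) : ℝ) := by
            apply mul_le_mul_of_nonneg_left _ (by positivity)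
            calc (1-ω*h n)^(n-1) ≤ Real.exp (-(ω*h n))^(n-1) := step1
              _ = Real.exp (-((n-1:ℕ) * (ω * h n))) := step2
              _ ≤ Real.exp (-(2*(ω*c)/3 * Real.log n)) := step3
              _ = (n:ℝ)^(-(2*(ω*c)/3) : ℝ) := step4
        _ = (n:ℝ)^((2:ℝ) - 2*(ω*c)/3) := by
            rw [← Real.rpow_natCast (n:ℝ) 2, ← Real.rpow_add hn0]
            norm_num [sub_eq_add_neg]
  -- B n → 0
  have hB : Tendsto (fun n : ℕ => (n:ℝ)^2/ω^2 *
      ((1-ω*h n)^n/n - (1-ω*h n)^(n-1)/((n:ℝ)-1))) atTop (nhds 0) := by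
    apply squeeze_zero_norm' ?_ (show Tendsto (fun n : ℕ => 2/ω^2 * ((n:ℝ)^2 * (1-ω*h n)^(n-1)))
      atTop (nhds 0) by simpa using hK.const_mul (2/ω^2))
    filter_upwards [hev, eventually_ge_atTop 2] with n h1 h2
    have hn2 : (2:ℝ) ≤ n := by exact_mod_cast h2
    have hn0 : (0:ℝ) < n := by linarith
    have hnn : 0 ≤ h n := hpos n (by omega)
    have hb0 : (0:ℝ) ≤ 1 - ω * h n := by linarith
    have hb1 : (1 - ω * h n) ≤ 1 := by nlinarith [mul_nonneg hω.le hnn]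
    have hpn : (1-ω*h n)^n ≤ (1-ω*h n)^(n-1) :=
      pow_le_pow_of_le_one hb0 hb1 (by omega)
    have hpnn : (0:ℝ) ≤ (1-ω*h n)^(n-1) := pow_nonneg hb0 _
    have hpn0 : (0:ℝ) ≤ (1-ω*h n)^n := pow_nonneg hb0 _
    have h1n : (1:ℝ) ≤ (n:ℝ) - 1 := by linarith
    have hA1 : (1-ω*h n)^n/(n:ℝ) ≤ (1-ω*h n)^(n-1) :=
      le_trans (div_le_self hpn0 (by linarith)) hpn
    have hA2 : (1-ω*h n)^(n-1)/((n:ℝ)-1) ≤ (1-ω*h n)^(n-1) := div_le_self hpnn h1n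
    have hA1' : (0:ℝ) ≤ (1-ω*h n)^n/(n:ℝ) := div_nonneg hpn0 hn0.le
    have hA2' : (0:ℝ) ≤ (1-ω*h n)^(n-1)/((n:ℝ)-1) := div_nonneg hpnn (by linarith)
    rw [Real.norm_eq_abs, abs_mul, abs_of_nonneg (show (0:ℝ) ≤ (n:ℝ)^2/ω^2 by positivity)]
    have habs : |(1-ω*h n)^n/(n:ℝ) - (1-ω*h n)^(n-1)/((n:ℝ)-1)| ≤ 2*(1-ω*h n)^(n-1) := by
      rw [abs_sub_le_iff]
      constructor <;> linarith
    calc (n:ℝ)^2/ω^2 * |(1-ω*h n)^n/(n:ℝ) - (1-ω*h n)^(n-1)/((n:ℝ)-1)|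
        ≤ (n:ℝ)^2/ω^2 * (2*(1-ω*h n)^(n-1)) :=
          mul_le_mul_of_nonneg_left habs (by positivity)
      _ = 2/ω^2 * ((n:ℝ)^2*(1-ω*h n)^(n-1)) := by ring
  have hsum := hA.add hB
  rw [add_zero] at hsum
  apply hsum.congr'
  filter_upwards [eventually_ge_atTop 2] with n hn
  rw [key n hn]; ring
end
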